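/- arXiv:2510.12155 — 5 statements merged into one kernel-verified Lean document; each statement's English description precedes it below -/
import Mathlib

section
/- If G is a finite simple graph such that every nonempty independent set I of G satisfies δ_G(I) ≥ |I| + 1, then G has a 2-factor. -/
variable {V : Type*}

/-- The degree of `v` in `H` (number of neighbors). -/
noncomputable def degN (H : SimpleGraph V) (v : V) : ℕ := Nat.card (H.neighborSet v)

/-- `I` is an independent set of `G`. -/
def IndepSet (G : SimpleGraph V) (I : Set V) : Prop := I.Pairwise fun u v => ¬ G.Adj u v

/-- Minimum degree (in `G`) among the vertices of `I`. -/
noncomputable def minDegOn (G : SimpleGraph V) (I : Set V) : ℕ := sInf (degN G '' I)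

/-- Minimum degree of `G`. -/
noncomputable def minDeg (G : SimpleGraph V) : ℕ := sInf (Set.range (degN G))

/-- Independence number of `G`. -/
noncomputable def indNum (G : SimpleGraph V) : ℕ :=
  sSup {n : ℕ | ∃ I : Finset V, IndepSet G ↑I ∧ I.card = n}

/-- `f(G) = max { |I| - δ_G(I) + 1 : I nonempty independent }`. -/
noncomputable def fVal (G : SimpleGraph V) : ℤ :=
  sSup {z : ℤ | ∃ I : Finset V, I.Nonempty ∧ IndepSet G ↑I ∧
    z = (I.card : ℤ) - (minDegOn G ↑I : ℤ) + 1}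

/-- `H` is a pseudo 2-factor of `G`: a spanning subgraph each of whose components is
`K₁`, `K₂`, or a cycle; equivalently all degrees are at most `2` and the degree
function is constant on each component. -/
def IsPseudoTwoFactor (G H : SimpleGraph V) : Prop :=
  H ≤ G ∧ (∀ v, degN H v ≤ 2) ∧ ∀ u v, H.Adj u v → degN H u = degN H v

/-- The number of components of `H` that are not cycles, i.e. contain a vertex of
degree at most `1`. -/
noncomputable def nonCycleCount (H : SimpleGraph V) : ℕ :=
  Nat.card {c : H.ConnectedComponent // ∃ v, H.connectedComponentMk v = c ∧ degN H v ≤ 1}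

/-- `H` is a 2-factor of `G`: a 2-regular spanning subgraph. -/
def IsTwoFactor (G H : SimpleGraph V) : Prop := H ≤ G ∧ ∀ v, degN H v = 2

section AuxTwoFactor


open Equiv Equiv.Perm

open scoped Classical

theorem Equiv.Perm.apply_inv_self {α : Type*} (f : Equiv.Perm α) (x : α) : f (f⁻¹ x) = x :=
  f.apply_symm_apply x

theorem Equiv.Perm.inv_apply_self {α : Type*} (f : Equiv.Perm α) (x : α) : f⁻¹ (f x) = x :=
  f.symm_apply_apply x

theorem Equiv.Perm.sameCycle_inv_apply_right {α : Type*} {f : Equiv.Perm α} {x y : α} :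
    f.SameCycle x (f⁻¹ y) ↔ f.SameCycle x y :=
  Equiv.Perm.sameCycle_symm_apply_right

/-- Reverse the cycle of `w` in `τ`. -/
noncomputable def revOn {V : Type*} (τ : Equiv.Perm V) (w : V) : Equiv.Perm V where
  toFun := fun z => if τ.SameCycle w z then τ⁻¹ z else τ z
  invFun := fun z => if τ.SameCycle w z then τ z else τ⁻¹ z
  left_inv := by
    intro z
    by_cases hz : τ.SameCycle w z
    · simp only [if_pos hz, if_pos ((Equiv.Perm.sameCycle_inv_apply_right (f := τ)).mpr hz),
        Equiv.Perm.apply_inv_self]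
    · simp only [if_neg hz,
        if_neg (fun hc => hz ((Equiv.Perm.sameCycle_apply_right (f := τ)).mp hc)),
        Equiv.Perm.inv_apply_self]
  right_inv := by
    intro z
    by_cases hz : τ.SameCycle w z
    · simp only [if_pos hz, if_pos ((Equiv.Perm.sameCycle_apply_right (f := τ)).mpr hz),
        Equiv.Perm.inv_apply_self]
    · simp only [if_neg hz,
        if_neg (fun hc => hz ((Equiv.Perm.sameCycle_inv_apply_right (f := τ)).mp hc)),
        Equiv.Perm.apply_inv_self]

variable {V : Type*}

lemma revOn_apply_pos (τ : Equiv.Perm V) {w z : V} (h : τ.SameCycle w z) :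
    revOn τ w z = τ⁻¹ z := by
  show (if τ.SameCycle w z then τ⁻¹ z else τ z) = τ⁻¹ z
  rw [if_pos h]

lemma revOn_apply_neg (τ : Equiv.Perm V) {w z : V} (h : ¬ τ.SameCycle w z) :
    revOn τ w z = τ z := by
  show (if τ.SameCycle w z then τ⁻¹ z else τ z) = τ z
  rw [if_neg h]

/-- Multiplying by a swap of two elements on the same cycle splits the cycle. -/
lemma not_sameCycle_mul_swap [Finite V] (σ : Equiv.Perm V) {x y : V}
    (hxy : x ≠ y) (h : σ.SameCycle x y) : ¬ (σ * Equiv.swap x y).SameCycle x y := by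
  classical
  set τ := σ * Equiv.swap x y with hτ
  have hτx : τ x = σ y := by simp [hτ, Equiv.Perm.mul_apply]
  have hτz : ∀ z, z ≠ x → z ≠ y → τ z = σ z := by
    intro z h1 h2; simp [hτ, Equiv.Perm.mul_apply, Equiv.swap_apply_of_ne_of_ne h1 h2]
  obtain ⟨i, hi0, _, hix⟩ := (h.symm).exists_pow_eq''
  have hex : ∃ k, 0 < k ∧ (σ ^ k) y = x := ⟨i, hi0, hix⟩
  set k := Nat.find hex with hk
  obtain ⟨hk0, hkx⟩ : 0 < k ∧ (σ ^ k) y = x := Nat.find_spec hex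
  have hmin : ∀ j, j < k → ¬ (0 < j ∧ (σ ^ j) y = x) := fun j hj => Nat.find_min hex hj
  have hne_x : ∀ j, 0 < j → j < k → (σ ^ j) y ≠ x := by
    intro j hj0 hjk hc; exact hmin j hjk ⟨hj0, hc⟩
  have hne_y : ∀ j, 0 < j → j < k → (σ ^ j) y ≠ y := by
    intro j hj0 hjk hc
    have h2 : (σ ^ (k - j)) ((σ ^ j) y) = x := by
      rw [← Equiv.Perm.mul_apply, ← pow_add]
      rwa [Nat.sub_add_cancel hjk.le]
    rw [hc] at h2
    exact hmin (k - j) (by omega) ⟨by omega, h2⟩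
  have key : ∀ j, 0 < j → j ≤ k → (τ ^ j) x = (σ ^ j) y := by
    intro j
    induction j with
    | zero => intro h0; omega
    | succ n ih =>
      intro _ hnk
      rcases Nat.eq_zero_or_pos n with hn0 | hn0
      · subst hn0; simpa [pow_one] using hτx
      · have hih := ih hn0 (by omega)
        have hne1 : (σ ^ n) y ≠ x := hne_x n hn0 (by omega)
        have hne2 : (σ ^ n) y ≠ y := hne_y n hn0 (by omega)
        calc (τ ^ (n+1)) x = τ ((τ ^ n) x) := by
              rw [pow_succ', Equiv.Perm.mul_apply]
          _ = σ ((σ ^ n) y) := by rw [hih]; exact hτz _ hne1 hne2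
          _ = (σ ^ (n+1)) y := by rw [pow_succ', Equiv.Perm.mul_apply]
  have hτk : (τ ^ k) x = x := by rw [key k hk0 le_rfl, hkx]
  rintro hSC
  obtain ⟨m, _, hm⟩ := hSC.exists_pow_eq'
  have hfix : ∀ q : ℕ, ((τ ^ k) ^ q) x = x := by
    intro q
    induction q with
    | zero => simp
    | succ q ihq => rw [pow_succ, Equiv.Perm.mul_apply, hτk, ihq]
  have hterm : (τ ^ (m % k)) x = (τ ^ m) x := by
    conv_rhs => rw [← Nat.mod_add_div m k]
    rw [pow_add, Equiv.Perm.mul_apply, pow_mul, hfix]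
  rw [← hterm] at hm
  set r := m % k with hr
  have hrk : r < k := Nat.mod_lt _ hk0
  rcases Nat.eq_zero_or_pos r with hr0 | hr0
  · rw [hr0] at hm; simp at hm; exact hxy hm
  · rw [key r hr0 hrk.le] at hm
    exact hne_y r hr0 hrk hm

section Surgery

variable {V : Type*} {G : SimpleGraph V}

/-- `σ` is a good permutation for `G`: non-fixed points map to neighbors, no 2-cycles. -/
def GoodP (G : SimpleGraph V) (σ : Equiv.Perm V) : Prop :=
  (∀ v, σ v ≠ v → G.Adj v (σ v)) ∧ ∀ v, σ v ≠ v → σ (σ v) ≠ v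

/-- `σ` can be improved: a good permutation with strictly fewer fixed points. -/
def Imp (G : SimpleGraph V) (σ : Equiv.Perm V) : Prop :=
  ∃ σ' : Equiv.Perm V, GoodP G σ' ∧ (∀ z, σ' z = z → σ z = z) ∧ ∃ z, σ z = z ∧ σ' z ≠ z

lemma goodP_one : GoodP G 1 := by
  constructor <;> intro v hv <;> simp at hv

variable {σ : Equiv.Perm V}

lemma fix_shift {u z : V} (hu : σ u = u) (hz : σ z = u) : z = u :=
  σ.injective (by rw [hz, hu])

/-- Surgery 1 : insert the fixed point `u` into the cycle of `w` between `w` and `σ w`. -/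
lemma surg1 (hg : GoodP G σ) {u w : V} (hu : σ u = u) (haw : G.Adj u w)
    (hwnf : σ w ≠ w) (haw2 : G.Adj u (σ w)) : Imp G σ := by
  have huw : u ≠ w := G.ne_of_adj haw
  have hσwu : σ w ≠ u := fun hc => huw (fix_shift hu hc).symm
  set σ' := σ * Equiv.swap u w with hσ'
  have e_u : σ' u = σ w := by simp [hσ', Equiv.Perm.mul_apply]
  have e_w : σ' w = u := by simp [hσ', Equiv.Perm.mul_apply, hu]
  have e_gen : ∀ z, z ≠ u → z ≠ w → σ' z = σ z := by
    intro z h1 h2; simp [hσ', Equiv.Perm.mul_apply, Equiv.swap_apply_of_ne_of_ne h1 h2]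
  refine ⟨σ', ⟨?_, ?_⟩, ?_, u, hu, by rw [e_u]; exact hσwu⟩
  · -- adjacency
    intro v hv
    rcases eq_or_ne v u with h | hvu
    · rw [h, e_u]; exact haw2
    rcases eq_or_ne v w with h | hvw
    · rw [h, e_w]; exact haw.symm
    · rw [e_gen v hvu hvw] at hv ⊢
      exact hg.1 v hv
  · -- no 2-cycles
    intro v hv
    rcases eq_or_ne v u with h | hvu
    · rw [h, e_u, e_gen (σ w) hσwu hwnf]
      intro hc; exact hσwu (fix_shift hu hc)
    rcases eq_or_ne v w with h | hvw
    · rw [h, e_w, e_u]; exact hwnf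
    · rw [e_gen v hvu hvw]
      rcases eq_or_ne (σ v) u with hvu2 | hvu2
      · exact absurd (fix_shift hu hvu2) hvu
      rcases eq_or_ne (σ v) w with hvw2 | hvw2
      · rw [hvw2, e_w]; exact fun hc => hvu hc.symm
      · rw [e_gen _ hvu2 hvw2]
        rw [e_gen v hvu hvw] at hv
        exact hg.2 v hv
  · -- fixed points only decrease
    intro z hz
    rcases eq_or_ne z u with h | hzu
    · rw [h] at hz ⊢; rw [e_u] at hz; exact absurd hz hσwu
    rcases eq_or_ne z w with h | hzw
    · rw [h] at hz; rw [e_w] at hz; exact absurd hz huw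
    · rwa [e_gen z hzu hzw] at hz

/-- Surgery 2 : three mutually adjacent fixed points `u a b` become a triangle. -/
lemma surg2 (hg : GoodP G σ) {u a b : V} (hu : σ u = u) (ha : σ a = a) (hb : σ b = b)
    (hua : G.Adj u a) (hub : G.Adj u b) (hab : G.Adj a b) : Imp G σ := by
  have h_ua : u ≠ a := G.ne_of_adj hua
  have h_ub : u ≠ b := G.ne_of_adj hub
  have h_ab : a ≠ b := G.ne_of_adj hab
  set σ' := σ * (Equiv.swap u b * Equiv.swap u a) with hσ'
  have e_u : σ' u = a := by
    simp [hσ', Equiv.Perm.mul_apply, Equiv.swap_apply_of_ne_of_ne h_ua.symm h_ab, ha]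
  have e_a : σ' a = b := by
    simp [hσ', Equiv.Perm.mul_apply, Equiv.swap_apply_of_ne_of_ne, hb]
  have e_b : σ' b = u := by
    simp [hσ', Equiv.Perm.mul_apply, Equiv.swap_apply_of_ne_of_ne h_ub.symm h_ab.symm, hu]
  have e_gen : ∀ z, z ≠ u → z ≠ a → z ≠ b → σ' z = σ z := by
    intro z h1 h2 h3
    simp [hσ', Equiv.Perm.mul_apply, Equiv.swap_apply_of_ne_of_ne h1 h2,
      Equiv.swap_apply_of_ne_of_ne h1 h3]
  refine ⟨σ', ⟨?_, ?_⟩, ?_, u, hu, by rw [e_u]; exact h_ua.symm⟩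
  · intro v hv
    rcases eq_or_ne v u with h | hvu
    · rw [h, e_u]; exact hua
    rcases eq_or_ne v a with h | hva
    · rw [h, e_a]; exact hab
    rcases eq_or_ne v b with h | hvb
    · rw [h, e_b]; exact hub.symm
    · rw [e_gen v hvu hva hvb] at hv ⊢; exact hg.1 v hv
  · intro v hv
    rcases eq_or_ne v u with h | hvu
    · rw [h, e_u, e_a]; exact h_ub.symm
    rcases eq_or_ne v a with h | hva
    · rw [h, e_a, e_b]; exact h_ua
    rcases eq_or_ne v b with h | hvb
    · rw [h, e_b, e_u]; exact h_ab
    · rw [e_gen v hvu hva hvb]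
      rcases eq_or_ne (σ v) u with h2 | h2
      · exact absurd (fix_shift hu h2) hvu
      rcases eq_or_ne (σ v) a with h3 | h3
      · exact absurd (fix_shift ha h3) hva
      rcases eq_or_ne (σ v) b with h4 | h4
      · exact absurd (fix_shift hb h4) hvb
      · rw [e_gen _ h2 h3 h4]
        rw [e_gen v hvu hva hvb] at hv
        exact hg.2 v hv
  · intro z hz
    rcases eq_or_ne z u with h | hzu
    · rw [h] at hz ⊢; rw [e_u] at hz; exact absurd hz.symm h_ua
    rcases eq_or_ne z a with h | hza
    · rw [h] at hz; rw [e_a] at hz; exact absurd hz.symm h_ab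
    rcases eq_or_ne z b with h | hzb
    · rw [h] at hz; rw [e_b] at hz; exact absurd hz h_ub
    · rwa [e_gen z hzu hza hzb] at hz

/-- Surgery 3 : fixed points `u, a` with `u ~ a`, `u ~ x`, `a ~ σ x`, `x` not fixed:
absorb `u` and `a` into the cycle of `x`. -/
lemma surg3 (hg : GoodP G σ) {u a x : V} (hu : σ u = u) (ha : σ a = a) (hx : σ x ≠ x)
    (hua : G.Adj u a) (hux : G.Adj u x) (hasx : G.Adj a (σ x)) : Imp G σ := by
  have h_ua : u ≠ a := G.ne_of_adj hua
  have h_ux : u ≠ x := G.ne_of_adj hux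
  have h_asx : a ≠ σ x := G.ne_of_adj hasx
  have h_sxu : σ x ≠ u := fun hc => h_ux (fix_shift hu hc).symm
  have h_ax : a ≠ x := fun hc => hx (by rw [← hc, ha])
  -- s = swap u (σ x) * swap u a ; σ' = s ∘ σ
  set σ' := (Equiv.swap u (σ x) * Equiv.swap u a) * σ with hσ'
  have e_s : ∀ z, z ≠ u → z ≠ a → z ≠ σ x → (Equiv.swap u (σ x) * Equiv.swap u a) z = z := by
    intro z h1 h2 h3
    simp [Equiv.Perm.mul_apply, Equiv.swap_apply_of_ne_of_ne h1 h2,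
      Equiv.swap_apply_of_ne_of_ne h1 h3]
  have e_u : σ' u = a := by
    simp [hσ', Equiv.Perm.mul_apply, hu, Equiv.swap_apply_of_ne_of_ne h_ua.symm h_asx]
  have e_a : σ' a = σ x := by
    simp [hσ', Equiv.Perm.mul_apply, ha]
  have e_x : σ' x = u := by
    simp [hσ', Equiv.Perm.mul_apply, Equiv.swap_apply_of_ne_of_ne h_sxu h_asx.symm]
  have e_gen : ∀ z, z ≠ u → z ≠ a → z ≠ x → σ' z = σ z := by
    intro z h1 h2 h3
    have g1 : σ z ≠ u := fun hc => h1 (fix_shift hu hc)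
    have g2 : σ z ≠ a := fun hc => h2 (fix_shift ha hc)
    have g3 : σ z ≠ σ x := fun hc => h3 (σ.injective hc)
    show (Equiv.swap u (σ x) * Equiv.swap u a) (σ z) = σ z
    exact e_s _ g1 g2 g3
  refine ⟨σ', ⟨?_, ?_⟩, ?_, u, hu, by rw [e_u]; exact h_ua.symm⟩
  · intro v hv
    rcases eq_or_ne v u with h | hvu
    · rw [h, e_u]; exact hua
    rcases eq_or_ne v a with h | hva
    · rw [h, e_a]; exact hasx
    rcases eq_or_ne v x with h | hvx
    · rw [h, e_x]; exact hux.symm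
    · rw [e_gen v hvu hva hvx] at hv ⊢; exact hg.1 v hv
  · intro v hv
    have e_sx : σ' (σ x) = σ (σ x) := by
      have g1 : σ x ≠ x := hx
      have hssx : σ (σ x) ≠ σ x := fun hc => hx (σ.injective hc)
      have hssxu : σ (σ x) ≠ u := fun hc => h_sxu (fix_shift hu hc)
      have hssxa : σ (σ x) ≠ a := fun hc => h_asx.symm (fix_shift ha hc)
      rw [e_gen (σ x) h_sxu h_asx.symm g1]
    rcases eq_or_ne v u with h | hvu
    · rw [h, e_u, e_a]; exact h_sxu
    rcases eq_or_ne v a with h | hva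
    · rw [h, e_a, e_sx]
      exact fun hc => h_asx.symm (fix_shift ha hc)
    rcases eq_or_ne v x with h | hvx
    · rw [h, e_x, e_u]; exact h_ax
    · rw [e_gen v hvu hva hvx]
      rcases eq_or_ne (σ v) u with h2 | h2
      · exact absurd (fix_shift hu h2) hvu
      rcases eq_or_ne (σ v) a with h3 | h3
      · exact absurd (fix_shift ha h3) hva
      rcases eq_or_ne (σ v) x with h4 | h4
      · rw [h4, e_x]; exact fun hc => hvu hc.symm
      · rw [e_gen _ h2 h3 h4]
        rw [e_gen v hvu hva hvx] at hv
        exact hg.2 v hv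
  · intro z hz
    rcases eq_or_ne z u with h | hzu
    · rw [h] at hz ⊢; rw [e_u] at hz; exact absurd hz.symm h_ua
    rcases eq_or_ne z a with h | hza
    · rw [h] at hz; rw [e_a] at hz; exact absurd hz.symm h_asx
    rcases eq_or_ne z x with h | hzx
    · rw [h] at hz; rw [e_x] at hz; exact absurd hz h_ux
    · rwa [e_gen z hzu hza hzx] at hz

/-- Surgery 4 : `u` fixed, `x, y` non-fixed neighbours of `u` with `σ x ~ σ y`. -/
lemma surg4 [Finite V] (hg : GoodP G σ) {u x y : V} (hu : σ u = u)
    (hux : G.Adj u x) (huy : G.Adj u y) (hxnf : σ x ≠ x) (hynf : σ y ≠ y)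
    (hxy : x ≠ y) (hysx : y ≠ σ x) (hxsy : x ≠ σ y)
    (hadj : G.Adj (σ x) (σ y)) : Imp G σ := by
  have h_ux : u ≠ x := G.ne_of_adj hux
  have h_uy : u ≠ y := G.ne_of_adj huy
  have h_sxu : σ x ≠ u := fun hc => h_ux (fix_shift hu hc).symm
  have h_syu : σ y ≠ u := fun hc => h_uy (fix_shift hu hc).symm
  have h_sxsy : σ x ≠ σ y := fun hc => hxy (σ.injective hc)
  have h2x : σ (σ x) ≠ x := hg.2 x hxnf
  have h2y : σ (σ y) ≠ y := hg.2 y hynf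
  have hixx : σ⁻¹ x ≠ x := fun hc => hxnf (Equiv.Perm.inv_eq_iff_eq.mp hc).symm
  have hiyy : σ⁻¹ y ≠ y := fun hc => hynf (Equiv.Perm.inv_eq_iff_eq.mp hc).symm
  by_cases hsc : σ.SameCycle x y
  · -- x and y on the same cycle : split it
    set τ := σ * Equiv.swap x y with hτdef
    have τ_x : τ x = σ y := by simp [hτdef, Equiv.Perm.mul_apply]
    have τ_y : τ y = σ x := by simp [hτdef, Equiv.Perm.mul_apply]
    have τ_gen : ∀ z, z ≠ x → z ≠ y → τ z = σ z := by
      intro z h1 h2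
      simp [hτdef, Equiv.Perm.mul_apply, Equiv.swap_apply_of_ne_of_ne h1 h2]
    have τ_u : τ u = u := by rw [τ_gen u h_ux h_uy, hu]
    have nsc_y : ¬ τ.SameCycle x y := not_sameCycle_mul_swap σ hxy hsc
    have sc_x : τ.SameCycle x x := Equiv.Perm.SameCycle.refl τ x
    have sc_sy : τ.SameCycle x (σ y) := by
      rw [← τ_x]; exact (Equiv.Perm.sameCycle_apply_right).mpr sc_x
    have nsc_sx : ¬ τ.SameCycle x (σ x) := by
      rw [← τ_y]; exact fun hc => nsc_y ((Equiv.Perm.sameCycle_apply_right).mp hc)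
    have nsc_u : ¬ τ.SameCycle x u := fun hc => h_ux (hc.eq_of_right τ_u).symm
    have nsc_ssx : ¬ τ.SameCycle x (σ (σ x)) := by
      have : τ (σ x) = σ (σ x) := τ_gen (σ x) hxnf (fun hc => hysx hc.symm)
      rw [← this]
      exact fun hc => nsc_sx ((Equiv.Perm.sameCycle_apply_right).mp hc)
    have τ_isx : τ (σ⁻¹ x) = x := by
      rw [τ_gen (σ⁻¹ x) hixx (fun hc => hxsy (Equiv.Perm.inv_eq_iff_eq.mp hc)),
        Equiv.Perm.apply_inv_self]
    have sc_isx : τ.SameCycle x (σ⁻¹ x) := by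
      have := (Equiv.Perm.sameCycle_apply_right (f := τ) (x := x) (y := σ⁻¹ x))
      rw [τ_isx] at this
      exact this.mp sc_x
    set μ := revOn τ x with hμdef
    set σ' := (Equiv.swap u (σ x) * Equiv.swap u x) * μ with hσ'def
    -- values of the outer permutation π₂
    have pi_u : (Equiv.swap u (σ x) * Equiv.swap u x) u = x := by
      simp [Equiv.Perm.mul_apply, Equiv.swap_apply_of_ne_of_ne h_ux.symm (Ne.symm hxnf)]
    have pi_x : (Equiv.swap u (σ x) * Equiv.swap u x) x = σ x := by
      simp [Equiv.Perm.mul_apply]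
    have pi_sx : (Equiv.swap u (σ x) * Equiv.swap u x) (σ x) = u := by
      simp [Equiv.Perm.mul_apply, Equiv.swap_apply_of_ne_of_ne h_sxu hxnf]
    have pi_gen : ∀ z, z ≠ u → z ≠ x → z ≠ σ x → (Equiv.swap u (σ x) * Equiv.swap u x) z = z := by
      intro z h1 h2 h3
      simp [Equiv.Perm.mul_apply, Equiv.swap_apply_of_ne_of_ne h1 h2,
        Equiv.swap_apply_of_ne_of_ne h1 h3]
    -- values of σ'
    have f_u : σ' u = x := by
      rw [hσ'def, Equiv.Perm.mul_apply, hμdef, revOn_apply_neg τ nsc_u, τ_u, pi_u]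
    have τi_x : τ⁻¹ x = σ⁻¹ x := by
      rw [Equiv.Perm.inv_eq_iff_eq, τ_isx]
    have f_x : σ' x = σ⁻¹ x := by
      rw [hσ'def, Equiv.Perm.mul_apply, hμdef, revOn_apply_pos τ sc_x, τi_x]
      exact pi_gen _ (fun hc => h_ux (((Equiv.Perm.inv_eq_iff_eq.mp hc).trans hu).symm)) hixx
        (fun hc => h2x (Equiv.Perm.inv_eq_iff_eq.mp hc).symm)
    have f_y : σ' y = u := by
      rw [hσ'def, Equiv.Perm.mul_apply, hμdef, revOn_apply_neg τ nsc_y, τ_y, pi_sx]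
    have f_sx : σ' (σ x) = σ (σ x) := by
      have t1 : τ (σ x) = σ (σ x) := τ_gen (σ x) hxnf (fun hc => hysx hc.symm)
      rw [hσ'def, Equiv.Perm.mul_apply, hμdef, revOn_apply_neg τ nsc_sx, t1]
      refine pi_gen _ (fun hc => h_sxu (fix_shift hu hc)) h2x
        (fun hc => hxnf (σ.injective hc))
    have τi_sy : τ⁻¹ (σ y) = x := by rw [Equiv.Perm.inv_eq_iff_eq, τ_x]
    have f_sy : σ' (σ y) = σ x := by
      rw [hσ'def, Equiv.Perm.mul_apply, hμdef, revOn_apply_pos τ sc_sy, τi_sy, pi_x]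
    have f_gen_sc : ∀ z, τ.SameCycle x z → z ≠ x → z ≠ σ y → σ' z = σ⁻¹ z := by
      intro z hz h1 h2
      have hzsx : z ≠ σ x := fun hc => nsc_sx (hc ▸ hz)
      have t1 : τ⁻¹ z = σ⁻¹ z := by
        rw [Equiv.Perm.inv_eq_iff_eq]
        rw [τ_gen (σ⁻¹ z) (fun hc => hzsx (Equiv.Perm.inv_eq_iff_eq.mp hc))
          (fun hc => h2 (Equiv.Perm.inv_eq_iff_eq.mp hc)), Equiv.Perm.apply_inv_self]
      rw [hσ'def, Equiv.Perm.mul_apply, hμdef, revOn_apply_pos τ hz, t1]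
      refine pi_gen _ ?_ ?_ ?_
      · intro hc
        have : z = u := by rw [← Equiv.Perm.apply_inv_self σ z, hc, hu]
        exact nsc_u (this ▸ hz)
      · intro hc
        exact hzsx (by rw [← Equiv.Perm.apply_inv_self σ z, hc])
      · intro hc
        have : z = σ (σ x) := by rw [← Equiv.Perm.apply_inv_self σ z, hc]
        exact nsc_ssx (this ▸ hz)
    have f_gen_nsc : ∀ z, ¬ τ.SameCycle x z → z ≠ u → z ≠ y → σ' z = σ z := by
      intro z hz h1 h2
      have hzx : z ≠ x := fun hc => hz (hc ▸ sc_x)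
      have t1 : τ z = σ z := τ_gen z hzx h2
      rw [hσ'def, Equiv.Perm.mul_apply, hμdef, revOn_apply_neg τ hz, t1]
      refine pi_gen _ (fun hc => h1 (fix_shift hu hc)) ?_ (fun hc => hzx (σ.injective hc))
      · intro hc
        have : z = σ⁻¹ x := by rw [← Equiv.Perm.inv_apply_self σ z, hc]
        exact hz (this ▸ sc_isx)
    -- distinctness of the five special points handled in case splits below
    refine ⟨σ', ⟨?_, ?_⟩, ?_, u, hu, by rw [f_u]; exact fun hc => h_ux hc.symm⟩
    · -- adjacency
      intro v hv
      rcases eq_or_ne v u with h | hvu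
      · rw [h, f_u]; exact hux
      rcases eq_or_ne v x with h | hvx
      · rw [h, f_x]
        have h1 : σ (σ⁻¹ x) ≠ σ⁻¹ x := by
          rw [Equiv.Perm.apply_inv_self]; exact fun hc => hixx hc.symm
        have := hg.1 (σ⁻¹ x) h1
        rw [Equiv.Perm.apply_inv_self] at this
        exact this.symm
      rcases eq_or_ne v y with h | hvy
      · rw [h, f_y]; exact huy.symm
      rcases eq_or_ne v (σ x) with h | hvsx
      · rw [h, f_sx]
        exact hg.1 (σ x) (fun hc => hxnf (σ.injective hc))
      rcases eq_or_ne v (σ y) with h | hvsy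
      · rw [h, f_sy]; exact hadj.symm
      by_cases hsv : τ.SameCycle x v
      · rw [f_gen_sc v hsv hvx hvsy]
        have h1 : σ (σ⁻¹ v) ≠ σ⁻¹ v := by
          rw [Equiv.Perm.apply_inv_self]
          intro hc
          rw [f_gen_sc v hsv hvx hvsy] at hv
          exact hv hc.symm
        have := hg.1 (σ⁻¹ v) h1
        rw [Equiv.Perm.apply_inv_self] at this
        exact this.symm
      · rw [f_gen_nsc v hsv hvu hvy] at hv ⊢
        exact hg.1 v hv
    · -- no 2-cycles
      intro v hv
      rcases eq_or_ne v u with h | hvu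
      · rw [h, f_u, f_x]
        exact fun hc => h_ux (((Equiv.Perm.inv_eq_iff_eq.mp hc).trans hu).symm)
      rcases eq_or_ne v x with h | hvx
      · rw [h, f_x]
        rcases eq_or_ne (σ⁻¹ x) (σ y) with h2 | h2
        · rw [h2, f_sy]; exact hxnf
        · rw [f_gen_sc _ sc_isx hixx h2]
          intro hc
          exact h2x (Equiv.Perm.inv_eq_iff_eq.mp (Equiv.Perm.inv_eq_iff_eq.mp hc)).symm
      rcases eq_or_ne v y with h | hvy
      · rw [h, f_y, f_u]; exact fun hc => hxy hc
      rcases eq_or_ne v (σ x) with h | hvsx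
      · rw [h, f_sx]
        rcases eq_or_ne (σ (σ x)) y with h2 | h2
        · rw [h2, f_y]; exact fun hc => h_sxu hc.symm
        · rw [f_gen_nsc _ nsc_ssx (fun hc => h_sxu (fix_shift hu hc)) h2]
          exact fun hc => h2x (σ.injective hc)
      rcases eq_or_ne v (σ y) with h | hvsy
      · rw [h, f_sy, f_sx]
        exact fun hc => hysx (σ.injective hc).symm
      by_cases hsv : τ.SameCycle x v
      · rw [f_gen_sc v hsv hvx hvsy]
        rcases eq_or_ne (σ⁻¹ v) (σ y) with h2 | h2
        · rw [h2, f_sy]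
          intro hc
          exact hxsy (σ.injective (hc.trans (Equiv.Perm.inv_eq_iff_eq.mp h2)))
        · have hivx : σ⁻¹ v ≠ x := fun hc => hvsx (by rw [← Equiv.Perm.apply_inv_self σ v, hc])
          rw [f_gen_sc (σ⁻¹ v) ?_ hivx h2]
          · intro hc
            -- σ⁻¹ (σ⁻¹ v) = v → v = σ (σ v) contradiction with two-freeness
            have hvnf : σ v ≠ v := by
              intro hfix
              have : τ v = v := by rw [τ_gen v hvx hvy, hfix]
              exact hvx (hsv.eq_of_right this).symm
            exact hg.2 v hvnf (Equiv.Perm.inv_eq_iff_eq.mp (Equiv.Perm.inv_eq_iff_eq.mp hc)).symm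
          · -- σ⁻¹ v is on the τ-cycle of x
            have : τ⁻¹ v = σ⁻¹ v := by
              rw [Equiv.Perm.inv_eq_iff_eq]
              rw [τ_gen (σ⁻¹ v) hivx (fun hc => hvsy (Equiv.Perm.inv_eq_iff_eq.mp hc)),
                Equiv.Perm.apply_inv_self]
            rw [← this]
            exact (Equiv.Perm.sameCycle_inv_apply_right).mpr hsv
      · have hvgen := f_gen_nsc v hsv hvu hvy
        rw [hvgen] at hv ⊢
        rcases eq_or_ne (σ v) y with h2 | h2
        · rw [h2, f_y]; exact fun hc => hvu hc.symm
        · have hsvu : σ v ≠ u := fun hc => hvu (fix_shift hu hc)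
          have hsvsc : ¬ τ.SameCycle x (σ v) := by
            rw [← τ_gen v (fun hc => hsv (hc ▸ sc_x)) hvy]
            exact fun hc => hsv ((Equiv.Perm.sameCycle_apply_right).mp hc)
          rw [f_gen_nsc (σ v) hsvsc hsvu h2]
          exact hg.2 v hv
    · -- fixed points only decrease
      intro z hz
      rcases eq_or_ne z u with h | hzu
      · rw [h] at hz ⊢; rw [f_u] at hz; exact absurd hz.symm h_ux
      rcases eq_or_ne z x with h | hzx
      · rw [h] at hz ⊢; rw [f_x] at hz
        exact (Equiv.Perm.inv_eq_iff_eq.mp hz).symm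
      rcases eq_or_ne z y with h | hzy
      · rw [h] at hz; rw [f_y] at hz; exact absurd hz h_uy
      rcases eq_or_ne z (σ x) with h | hzsx
      · rw [h] at hz ⊢; rw [f_sx] at hz; exact hz
      rcases eq_or_ne z (σ y) with h | hzsy
      · rw [h] at hz; rw [f_sy] at hz; exact absurd hz h_sxsy
      by_cases hsz : τ.SameCycle x z
      · rw [f_gen_sc z hsz hzx hzsy] at hz
        exact (Equiv.Perm.inv_eq_iff_eq.mp hz).symm
      · rwa [f_gen_nsc z hsz hzu hzy] at hz
  · -- x and y on different cycles : merge them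
    have nsc_x : ¬ σ.SameCycle y x := fun hc => hsc hc.symm
    have nsc_u : ¬ σ.SameCycle y u := fun hc => h_uy (hc.eq_of_right hu).symm
    have sc_y : σ.SameCycle y y := Equiv.Perm.SameCycle.refl σ y
    have sc_sy : σ.SameCycle y (σ y) := (Equiv.Perm.sameCycle_apply_right).mpr sc_y
    have nsc_sx : ¬ σ.SameCycle y (σ x) := fun hc =>
      nsc_x ((Equiv.Perm.sameCycle_apply_right).mp hc)
    have nsc_ssx : ¬ σ.SameCycle y (σ (σ x)) := fun hc =>
      nsc_sx ((Equiv.Perm.sameCycle_apply_right).mp hc)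
    have sc_isy : σ.SameCycle y (σ⁻¹ y) := (Equiv.Perm.sameCycle_inv_apply_right).mpr sc_y
    set μ := revOn σ y with hμdef
    set σ' := (Equiv.swap u (σ x) * Equiv.swap u y) * μ with hσ'def
    have pi_u : (Equiv.swap u (σ x) * Equiv.swap u y) u = y := by
      simp [Equiv.Perm.mul_apply, Equiv.swap_apply_of_ne_of_ne h_uy.symm hysx]
    have pi_y : (Equiv.swap u (σ x) * Equiv.swap u y) y = σ x := by
      simp [Equiv.Perm.mul_apply]
    have pi_sx : (Equiv.swap u (σ x) * Equiv.swap u y) (σ x) = u := by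
      simp [Equiv.Perm.mul_apply, Equiv.swap_apply_of_ne_of_ne h_sxu (Ne.symm hysx)]
    have pi_gen : ∀ z, z ≠ u → z ≠ y → z ≠ σ x → (Equiv.swap u (σ x) * Equiv.swap u y) z = z := by
      intro z h1 h2 h3
      simp [Equiv.Perm.mul_apply, Equiv.swap_apply_of_ne_of_ne h1 h2,
        Equiv.swap_apply_of_ne_of_ne h1 h3]
    have f_u : σ' u = y := by
      rw [hσ'def, Equiv.Perm.mul_apply, hμdef, revOn_apply_neg σ nsc_u, hu, pi_u]
    have f_y : σ' y = σ⁻¹ y := by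
      rw [hσ'def, Equiv.Perm.mul_apply, hμdef, revOn_apply_pos σ sc_y]
      exact pi_gen _ (fun hc => h_uy (((Equiv.Perm.inv_eq_iff_eq.mp hc).trans hu).symm)) hiyy
        (fun hc => nsc_sx (hc ▸ sc_isy))
    have f_sy : σ' (σ y) = σ x := by
      have t1 : σ⁻¹ (σ y) = y := Equiv.Perm.inv_apply_self σ y
      rw [hσ'def, Equiv.Perm.mul_apply, hμdef, revOn_apply_pos σ sc_sy, t1, pi_y]
    have f_x : σ' x = u := by
      rw [hσ'def, Equiv.Perm.mul_apply, hμdef, revOn_apply_neg σ nsc_x, pi_sx]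
    have f_sx : σ' (σ x) = σ (σ x) := by
      rw [hσ'def, Equiv.Perm.mul_apply, hμdef, revOn_apply_neg σ nsc_sx]
      refine pi_gen _ (fun hc => h_sxu (fix_shift hu hc)) (fun hc => nsc_ssx (hc ▸ sc_y))
        (fun hc => hxnf (σ.injective hc))
    have f_gen_sc : ∀ z, σ.SameCycle y z → z ≠ y → z ≠ σ y → σ' z = σ⁻¹ z := by
      intro z hz h1 h2
      rw [hσ'def, Equiv.Perm.mul_apply, hμdef, revOn_apply_pos σ hz]
      refine pi_gen _ ?_ ?_ ?_
      · intro hc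
        have hzu2 : z = u := (Equiv.Perm.inv_eq_iff_eq.mp hc).trans hu
        exact nsc_u (hzu2 ▸ hz)
      · intro hc
        exact h2 (Equiv.Perm.inv_eq_iff_eq.mp hc)
      · intro hc
        exact nsc_sx (hc ▸ ((Equiv.Perm.sameCycle_inv_apply_right).mpr hz))
    have f_gen_nsc : ∀ z, ¬ σ.SameCycle y z → z ≠ u → z ≠ x → σ' z = σ z := by
      intro z hz h1 h2
      rw [hσ'def, Equiv.Perm.mul_apply, hμdef, revOn_apply_neg σ hz]
      refine pi_gen _ (fun hc => h1 (fix_shift hu hc)) ?_ (fun hc => h2 (σ.injective hc))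
      · intro hc
        exact hz (by
          have : z = σ⁻¹ y := by rw [← Equiv.Perm.inv_apply_self σ z, hc]
          rw [this]; exact sc_isy)
    refine ⟨σ', ⟨?_, ?_⟩, ?_, u, hu, by rw [f_u]; exact fun hc => h_uy hc.symm⟩
    · -- adjacency
      intro v hv
      rcases eq_or_ne v u with h | hvu
      · rw [h, f_u]; exact huy
      rcases eq_or_ne v y with h | hvy
      · rw [h, f_y]
        have h1 : σ (σ⁻¹ y) ≠ σ⁻¹ y := by
          rw [Equiv.Perm.apply_inv_self]; exact fun hc => hiyy hc.symm
        have := hg.1 (σ⁻¹ y) h1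
        rw [Equiv.Perm.apply_inv_self] at this
        exact this.symm
      rcases eq_or_ne v (σ y) with h | hvsy
      · rw [h, f_sy]; exact hadj.symm
      rcases eq_or_ne v x with h | hvx
      · rw [h, f_x]; exact hux.symm
      rcases eq_or_ne v (σ x) with h | hvsx
      · rw [h, f_sx]
        exact hg.1 (σ x) (fun hc => hxnf (σ.injective hc))
      by_cases hsv : σ.SameCycle y v
      · rw [f_gen_sc v hsv hvy hvsy]
        have h1 : σ (σ⁻¹ v) ≠ σ⁻¹ v := by
          rw [Equiv.Perm.apply_inv_self]
          intro hc
          rw [f_gen_sc v hsv hvy hvsy] at hv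
          exact hv hc.symm
        have := hg.1 (σ⁻¹ v) h1
        rw [Equiv.Perm.apply_inv_self] at this
        exact this.symm
      · rw [f_gen_nsc v hsv hvu hvx] at hv ⊢
        exact hg.1 v hv
    · -- no 2-cycles
      intro v hv
      rcases eq_or_ne v u with h | hvu
      · rw [h, f_u, f_y]
        exact fun hc => h_uy (((Equiv.Perm.inv_eq_iff_eq.mp hc).trans hu).symm)
      rcases eq_or_ne v y with h | hvy
      · rw [h, f_y]
        have hivy : σ⁻¹ y ≠ σ y := fun hc => h2y (Equiv.Perm.inv_eq_iff_eq.mp hc).symm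
        rw [f_gen_sc _ sc_isy hiyy hivy]
        intro hc
        exact h2y (Equiv.Perm.inv_eq_iff_eq.mp (Equiv.Perm.inv_eq_iff_eq.mp hc)).symm
      rcases eq_or_ne v (σ y) with h | hvsy
      · rw [h, f_sy, f_sx]
        exact fun hc => hysx (σ.injective hc).symm
      rcases eq_or_ne v x with h | hvx
      · rw [h, f_x, f_u]; exact fun hc => hxy hc.symm
      rcases eq_or_ne v (σ x) with h | hvsx
      · rw [h, f_sx]
        have g1 : ¬ σ.SameCycle y (σ (σ x)) := nsc_ssx
        have g2 : σ (σ x) ≠ u := fun hc => h_sxu (fix_shift hu hc)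
        have g3 : σ (σ x) ≠ x := h2x
        rw [f_gen_nsc _ g1 g2 g3]
        exact fun hc => h2x (σ.injective hc)
      by_cases hsv : σ.SameCycle y v
      · rw [f_gen_sc v hsv hvy hvsy]
        rcases eq_or_ne (σ⁻¹ v) (σ y) with h2 | h2
        · rw [h2, f_sy]
          exact fun hc => hxsy (σ.injective (hc.trans (Equiv.Perm.inv_eq_iff_eq.mp h2)))
        · have hivy2 : σ⁻¹ v ≠ y := fun hc => hvsy (Equiv.Perm.inv_eq_iff_eq.mp hc ▸ (by
            rw [← Equiv.Perm.apply_inv_self σ v, hc]))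
          rw [f_gen_sc (σ⁻¹ v) ((Equiv.Perm.sameCycle_inv_apply_right).mpr hsv) hivy2 h2]
          intro hc
          have hvnf : σ v ≠ v := fun hfix => hvy (hsv.eq_of_right hfix).symm
          exact hg.2 v hvnf (Equiv.Perm.inv_eq_iff_eq.mp (Equiv.Perm.inv_eq_iff_eq.mp hc)).symm
      · have hvgen := f_gen_nsc v hsv hvu hvx
        rw [hvgen] at hv ⊢
        rcases eq_or_ne (σ v) x with h2 | h2
        · rw [h2, f_x]; exact fun hc => hvu hc.symm
        · have g1 : ¬ σ.SameCycle y (σ v) := fun hc =>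
            hsv ((Equiv.Perm.sameCycle_apply_right).mp hc)
          have g2 : σ v ≠ u := fun hc => hvu (fix_shift hu hc)
          rw [f_gen_nsc (σ v) g1 g2 h2]
          exact hg.2 v hv
    · -- fixed points only decrease
      intro z hz
      rcases eq_or_ne z u with h | hzu
      · rw [h] at hz ⊢; rw [f_u] at hz; exact absurd hz.symm h_uy
      rcases eq_or_ne z y with h | hzy
      · rw [h] at hz ⊢; rw [f_y] at hz
        exact (Equiv.Perm.inv_eq_iff_eq.mp hz).symm
      rcases eq_or_ne z (σ y) with h | hzsy
      · rw [h] at hz; rw [f_sy] at hz; exact absurd hz h_sxsy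
      rcases eq_or_ne z x with h | hzx
      · rw [h] at hz; rw [f_x] at hz; exact absurd hz h_ux
      rcases eq_or_ne z (σ x) with h | hzsx
      · rw [h] at hz ⊢; rw [f_sx] at hz; exact hz
      by_cases hsz : σ.SameCycle y z
      · rw [f_gen_sc z hsz hzy hzsy] at hz
        exact (Equiv.Perm.inv_eq_iff_eq.mp hz).symm
      · rwa [f_gen_nsc z hsz hzu hzx] at hz

end Surgery

section Assembly

variable [Fintype V] {G : SimpleGraph V}

noncomputable def fixF [Fintype V] (σ : Equiv.Perm V) : Finset V :=
  Finset.univ.filter (fun v => σ v = v)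

lemma imp_card_lt {σ : Equiv.Perm V} (h : Imp G σ) :
    ∃ σ', GoodP G σ' ∧ (fixF σ').card < (fixF σ).card := by
  obtain ⟨σ', hg, hsub, z, hz, hz'⟩ := h
  have hss : fixF σ' ⊆ fixF σ := by
    intro w hw
    simp only [fixF, Finset.mem_filter, Finset.mem_univ, true_and] at hw ⊢
    exact hsub w hw
  exact ⟨σ', hg, Finset.card_lt_card ((Finset.ssubset_iff_of_subset hss).mpr
    ⟨z, by simp [fixF, hz], by simp [fixF, hz']⟩)⟩

lemma degN_eq_card (v : V) : degN G v = (G.neighborFinset v).card := by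
  rw [degN, Nat.card_coe_set_eq, SimpleGraph.neighborFinset_def,
    Set.ncard_eq_toFinset_card']

lemma memNF {v w : V} : w ∈ G.neighborFinset v ↔ G.Adj v w := by
  rw [SimpleGraph.mem_neighborFinset]

lemma minDegOn_le {I : Finset V} {v : V} (hv : v ∈ I) : minDegOn G ↑I ≤ degN G v := by
  apply Nat.sInf_le
  exact ⟨v, by simpa using hv, rfl⟩

end Assembly

end AuxTwoFactor

/-- If every nonempty independent set `I` of `G` satisfies `δ_G(I) ≥ |I| + 1`,
then `G` has a 2-factor. -/
theorem two_factor_of_indep_minDeg {V : Type*} [Fintype V] (G : SimpleGraph V)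
    (h : ∀ I : Finset V, I.Nonempty → IndepSet G ↑I → I.card + 1 ≤ minDegOn G ↑I) :
    ∃ H : SimpleGraph V, IsTwoFactor G H := by
  classical
  -- choose a good permutation with the fewest fixed points
  have hne : (Finset.univ.filter (fun σ : Equiv.Perm V => GoodP G σ)).Nonempty :=
    ⟨1, by simp [goodP_one]⟩
  obtain ⟨σ, hσmem, hminσ⟩ :=
    Finset.exists_min_image (Finset.univ.filter (fun σ : Equiv.Perm V => GoodP G σ))
      (fun σ => (fixF σ).card) hne
  have hgood : GoodP G σ := (Finset.mem_filter.mp hσmem).2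
  have hnoimp : ¬ Imp G σ := by
    intro hI
    obtain ⟨σ', hg', hlt⟩ := imp_card_lt hI
    have := hminσ σ' (Finset.mem_filter.mpr ⟨Finset.mem_univ _, hg'⟩)
    omega
  by_cases hfix : ∀ v, σ v ≠ v
  · -- no fixed points : σ yields a 2-factor
    refine ⟨SimpleGraph.fromRel (fun a b => σ a = b), ?_, ?_⟩
    · intro a b hab
      obtain ⟨hne2, h1 | h1⟩ := hab
      · rw [← h1]; exact hgood.1 a (hfix a)
      · rw [← h1]; exact (hgood.1 b (hfix b)).symm
    · intro v
      have hset : (SimpleGraph.fromRel (fun a b => σ a = b)).neighborSet v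
          = {σ v, σ⁻¹ v} := by
        ext w
        simp only [SimpleGraph.mem_neighborSet, SimpleGraph.fromRel_adj, Set.mem_insert_iff,
          Set.mem_singleton_iff]
        constructor
        · rintro ⟨hne2, h1 | h1⟩
          · exact Or.inl h1.symm
          · exact Or.inr (Equiv.Perm.inv_eq_iff_eq.mpr h1.symm).symm
        · rintro (rfl | rfl)
          · exact ⟨fun hc => hfix v hc.symm, Or.inl rfl⟩
          · refine ⟨fun hc => hfix (σ⁻¹ v) ?_, Or.inr (Equiv.Perm.apply_inv_self σ v)⟩
            rw [Equiv.Perm.apply_inv_self, ← hc]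
      have hne2 : σ v ≠ σ⁻¹ v := by
        intro hc
        exact hgood.2 v (hfix v) (Equiv.Perm.inv_eq_iff_eq.mp hc.symm).symm
      rw [degN, hset, Nat.card_coe_set_eq, Set.ncard_pair hne2]
  · push_neg at hfix
    obtain ⟨u, hu⟩ := hfix
    exfalso
    -- minimality consequences
    have star1 : ∀ w, G.Adj u w → σ w ≠ w → ¬ G.Adj u (σ w) :=
      fun w hw hnf hadj => hnoimp (surg1 hgood hu hw hnf hadj)
    by_cases hex : ∃ w, G.Adj u w ∧ σ w = w
    · -- u has a fixed neighbour : degree contradiction, in both directions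
      obtain ⟨b, hub, hb⟩ := hex
      have hBB : ∀ a c : V, σ a = a → σ c = c → G.Adj a c →
          (G.neighborFinset a).card + 1 ≤ (G.neighborFinset c).card := by
        intro a c ha hc hac
        have star1a : ∀ w, G.Adj a w → σ w ≠ w → ¬ G.Adj a (σ w) :=
          fun w hw hnf hadj => hnoimp (surg1 hgood ha hw hnf hadj)
        set f : V → V := fun w => if σ w = w then w else σ w with hfdef
        set NB := (G.neighborFinset a).erase c with hNB
        have hNBadj : ∀ w ∈ NB, G.Adj a w ∧ w ≠ c := by
          intro w hw
          rw [hNB, Finset.mem_erase, SimpleGraph.mem_neighborFinset] at hw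
          exact ⟨hw.2, hw.1⟩
        -- c is not adjacent to any f w
        have hcf : ∀ w ∈ NB, ¬ G.Adj c (f w) := by
          intro w hw hadj
          obtain ⟨haw, hwc⟩ := hNBadj w hw
          by_cases hfw : σ w = w
          · rw [hfdef] at hadj; simp only [if_pos hfw] at hadj
            exact hnoimp (surg2 hgood ha hc hfw hac haw hadj)
          · rw [hfdef] at hadj; simp only [if_neg hfw] at hadj
            exact hnoimp (surg3 hgood ha hc hfw hac haw hadj)
        -- distinct f w, f w' are not adjacent
        have hff : ∀ w ∈ NB, ∀ w' ∈ NB, w ≠ w' → ¬ G.Adj (f w) (f w') := by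
          intro w hw w' hw' hne2 hadj
          obtain ⟨haw, -⟩ := hNBadj w hw
          obtain ⟨haw', -⟩ := hNBadj w' hw'
          by_cases hfw : σ w = w <;> by_cases hfw' : σ w' = w'
          · rw [hfdef] at hadj; simp only [if_pos hfw, if_pos hfw'] at hadj
            exact hnoimp (surg2 hgood ha hfw hfw' haw haw' hadj)
          · rw [hfdef] at hadj; simp only [if_pos hfw, if_neg hfw'] at hadj
            exact hnoimp (surg3 hgood ha hfw hfw' haw haw' hadj)
          · rw [hfdef] at hadj; simp only [if_neg hfw, if_pos hfw'] at hadj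
            exact hnoimp (surg3 hgood ha hfw' hfw haw' haw hadj.symm)
          · rw [hfdef] at hadj; simp only [if_neg hfw, if_neg hfw'] at hadj
            have hne3 : w' ≠ σ w := by
              intro hc2
              exact star1a w haw hfw (hc2 ▸ haw')
            have hne4 : w ≠ σ w' := by
              intro hc2
              exact star1a w' haw' hfw' (hc2 ▸ haw)
            exact hnoimp (surg4 hgood ha haw haw' hfw hfw' hne2 hne3 hne4 hadj)
        -- the independent set
        set I : Finset V := insert c (NB.image f) with hI
        have hinj : Set.InjOn f ↑NB := by
          intro w hw w' hw' heq
          rw [hfdef] at heq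
          by_cases hfw : σ w = w <;> by_cases hfw' : σ w' = w'
          · simpa only [if_pos hfw, if_pos hfw'] using heq
          · simp only [if_pos hfw, if_neg hfw'] at heq
            have h3 : σ (σ w') = σ w' := by rw [← heq]; exact hfw
            exact absurd (σ.injective h3) hfw'
          · simp only [if_neg hfw, if_pos hfw'] at heq
            have h3 : σ (σ w) = σ w := by rw [heq]; exact hfw'
            exact absurd (σ.injective h3) hfw
          · simp only [if_neg hfw, if_neg hfw'] at heq
            exact σ.injective heq
        have hcnot : c ∉ NB.image f := by
          intro hmem
          obtain ⟨w, hw, hweq⟩ := Finset.mem_image.mp hmem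
          obtain ⟨-, hwc⟩ := hNBadj w hw
          by_cases hfw : σ w = w
          · rw [hfdef] at hweq; simp only [if_pos hfw] at hweq; exact hwc hweq
          · rw [hfdef] at hweq; simp only [if_neg hfw] at hweq
            exact hwc (fix_shift hc hweq)
        have hcard : I.card = (G.neighborFinset a).card := by
          rw [hI, Finset.card_insert_of_notMem hcnot, Finset.card_image_of_injOn hinj,
            hNB, Finset.card_erase_of_mem (memNF.mpr hac)]
          have : 0 < (G.neighborFinset a).card :=
            Finset.card_pos.mpr ⟨c, memNF.mpr hac⟩
          omega
        have hindep : IndepSet G ↑I := by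
          intro p hp q hq hpq
          simp only [hI, Finset.coe_insert, Set.mem_insert_iff, Finset.mem_coe,
            Finset.coe_image, Set.mem_image] at hp hq
          rcases hp with rfl | ⟨w, hw, rfl⟩ <;> rcases hq with rfl | ⟨w', hw', rfl⟩
          · exact absurd rfl hpq
          · exact hcf w' (by exact_mod_cast hw')
          · intro hadj
            exact hcf w (by exact_mod_cast hw) hadj.symm
          · have hww' : w ≠ w' := fun hc2 => hpq (by rw [hc2])
            exact hff w (by exact_mod_cast hw) w' (by exact_mod_cast hw') hww'
        have hmem_c : c ∈ I := Finset.mem_insert_self c _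
        have := h I ⟨c, hmem_c⟩ hindep
        have h2 := minDegOn_le (G := G) hmem_c
        rw [degN_eq_card] at h2
        omega
      have h1 := hBB u b hu hb hub
      have h2 := hBB b u hb hu hub.symm
      omega
    · -- all neighbours of u are non-fixed
      push_neg at hex
      set I : Finset V := insert u ((G.neighborFinset u).image σ) with hI
      have hunot : u ∉ (G.neighborFinset u).image σ := by
        intro hmem
        obtain ⟨w, hw, hweq⟩ := Finset.mem_image.mp hmem
        have := fix_shift hu hweq
        rw [this] at hw
        exact G.irrefl (memNF.mp hw)
      have hcard : I.card = (G.neighborFinset u).card + 1 := by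
        rw [hI, Finset.card_insert_of_notMem hunot,
          Finset.card_image_of_injective _ σ.injective]
      have hindep : IndepSet G ↑I := by
        intro p hp q hq hpq
        simp only [hI, Finset.coe_insert, Set.mem_insert_iff, Finset.mem_coe,
          Finset.coe_image, Set.mem_image] at hp hq
        rcases hp with rfl | ⟨w, hw, rfl⟩ <;> rcases hq with rfl | ⟨w', hw', rfl⟩
        · exact absurd rfl hpq
        · have hw2 : G.Adj p w' := memNF.mp (by exact_mod_cast hw')
          exact star1 w' hw2 (hex w' hw2)
        · have hw2 : G.Adj q w := memNF.mp (by exact_mod_cast hw)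
          intro hadj
          exact star1 w hw2 (hex w hw2) hadj.symm
        · have haw : G.Adj u w := memNF.mp (by exact_mod_cast hw)
          have haw' : G.Adj u w' := memNF.mp (by exact_mod_cast hw')
          have hww' : w ≠ w' := fun hc2 => hpq (by rw [hc2])
          have hne3 : w' ≠ σ w := by
            intro hc2
            exact star1 w haw (hex w haw) (hc2 ▸ haw')
          have hne4 : w ≠ σ w' := by
            intro hc2
            exact star1 w' haw' (hex w' haw') (hc2 ▸ haw)
          exact fun hadj =>
            hnoimp (surg4 hgood hu haw haw' (hex w haw) (hex w' haw') hww' hne3 hne4 hadj)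
      have hmem_u : u ∈ I := Finset.mem_insert_self u _
      have := h I ⟨u, hmem_u⟩ hindep
      have h2 := minDegOn_le (G := G) hmem_u
      rw [degN_eq_card] at h2
      omega
end

section
/- Every finite simple graph G with δ(G) ≥ α(G) + 1 has a 2-factor, where δ(G) is the minimum degree and α(G) is the independence number of G. -/
variable {V : Type*}

set_option maxHeartbeats 1600000

namespace TwoFactorAux

open SimpleGraph

lemma degN_eq_ncard (H : SimpleGraph V) (v : V) : degN H v = (H.neighborSet v).ncard :=
  Nat.card_coe_set_eq _

lemma degN_pos_of_adj [Fintype V] {H : SimpleGraph V} {v w : V} (h : H.Adj v w) :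
    degN H v ≠ 0 := by
  rw [degN_eq_ncard]
  have : w ∈ H.neighborSet v := h
  intro h0
  rw [Set.ncard_eq_zero (Set.toFinite _)] at h0
  simp [h0] at this

lemma neighborSet_empty_of_degN_zero [Fintype V] {H : SimpleGraph V} {v : V}
    (h : degN H v = 0) : H.neighborSet v = ∅ := by
  rw [degN_eq_ncard] at h
  exact (Set.ncard_eq_zero (Set.toFinite _)).mp h

lemma not_adj_of_degN_zero [Fintype V] {H : SimpleGraph V} {v w : V}
    (h : degN H v = 0) : ¬ H.Adj v w := by
  intro hadj
  have := neighborSet_empty_of_degN_zero h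
  rw [Set.eq_empty_iff_forall_notMem] at this
  exact this w hadj

/-- modify a graph by deleting edge set `D` and adding edge set `A`. -/
def patch (H : SimpleGraph V) (A D : Set (Sym2 V)) : SimpleGraph V where
  Adj a b := a ≠ b ∧ ((H.Adj a b ∧ s(a, b) ∉ D) ∨ s(a, b) ∈ A)
  symm := by
    constructor
    intro a b ⟨hne, h⟩
    refine ⟨hne.symm, ?_⟩
    rw [Sym2.eq_swap (a := b)]
    rcases h with ⟨h1, h2⟩ | h
    · exact Or.inl ⟨h1.symm, h2⟩
    · exact Or.inr h
  loopless := ⟨fun a h => h.1 rfl⟩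

lemma patch_neighborSet (H : SimpleGraph V) (A D : Set (Sym2 V)) (v : V) :
    (patch H A D).neighborSet v
      = {w | v ≠ w ∧ ((H.Adj v w ∧ s(v, w) ∉ D) ∨ s(v, w) ∈ A)} := rfl

lemma patch_neighborSet_of_not_mem (H : SimpleGraph V) {A D : Set (Sym2 V)} {v : V}
    (hA : ∀ e ∈ A, v ∉ e) (hD : ∀ e ∈ D, v ∉ e) :
    (patch H A D).neighborSet v = H.neighborSet v := by
  ext w
  simp only [patch_neighborSet, Set.mem_setOf_eq, mem_neighborSet]
  constructor
  · rintro ⟨hne, ⟨h1, _⟩ | h⟩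
    · exact h1
    · exact absurd (Sym2.mem_mk_left v w) (hA _ h)
  · intro h
    exact ⟨h.ne, Or.inl ⟨h, fun hd => hD _ hd (Sym2.mem_mk_left v w)⟩⟩

lemma patch_le {G H : SimpleGraph V} {A D : Set (Sym2 V)} (hHG : H ≤ G)
    (hA : ∀ e ∈ A, ∀ a b, e = s(a, b) → a ≠ b → G.Adj a b) :
    patch H A D ≤ G := by
  intro a b hab
  rcases hab with ⟨hne, ⟨h1, _⟩ | h⟩
  · exact hHG h1
  · exact hA _ h a b rfl hne

/-- an edge of a path incident to its first vertex is the first edge. -/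
lemma eq_getVert_one_of_mem_edges {H : SimpleGraph V} {w u c : V} (q : H.Walk w u)
    (hq : q.IsPath) (h : s(w, c) ∈ q.edges) : c = q.getVert 1 := by
  cases q with
  | nil => simp at h
  | cons hadj r =>
    rename_i b
    rw [Walk.edges_cons, List.mem_cons] at h
    rw [Walk.cons_isPath_iff] at hq
    rcases h with h | h
    · rw [Sym2.eq_iff] at h
      rcases h with ⟨-, rfl⟩ | ⟨h1, rfl⟩
      · simp
      · exact absurd h1 hadj.ne
    · exact absurd (Walk.fst_mem_support_of_mem_edges r h) hq.2

lemma exists_cyclePerm [Fintype V] {H : SimpleGraph V}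
    (hdeg : ∀ v, degN H v = 0 ∨ degN H v = 2) {a : V} (ha : degN H a = 2) :
    ∃ σ : Equiv.Perm V, (∃ z, σ z ≠ z) ∧
      ∀ z, σ z ≠ z → H.Adj z (σ z) ∧ σ (σ z) ≠ z := by
  classical
  -- a has a neighbor
  obtain ⟨x0, y0, hxy0, hN0⟩ := Set.ncard_eq_two.mp ((degN_eq_ncard H a) ▸ ha)
  have hab : H.Adj a x0 := by
    have : x0 ∈ H.neighborSet a := by rw [hN0]; simp
    exact this
  -- maximal path
  set P : Set ℕ := {n | ∃ (w u : V) (q : H.Walk w u), q.IsPath ∧ q.length = n} with hP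
  have h1P : 1 ∈ P := by
    refine ⟨a, x0, Walk.cons hab Walk.nil, ?_, rfl⟩
    simp [Walk.cons_isPath_iff, hab.ne]
  have hbdd : BddAbove P := by
    refine ⟨Fintype.card V, ?_⟩
    rintro n ⟨w, u, q, hq, rfl⟩
    exact hq.length_lt.le
  obtain ⟨w, u, q, hq, hlen⟩ := Nat.sSup_mem ⟨1, h1P⟩ hbdd
  have hm1 : 1 ≤ sSup P := le_csSup hbdd h1P
  have hnil : ¬ q.Nil := by rw [Walk.not_nil_iff_lt_length]; omega
  have hadj1 : H.Adj w (q.getVert 1) := Walk.adj_snd hnil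
  have degw : degN H w = 2 :=
    (hdeg w).resolve_left (fun h0 => (not_adj_of_degN_zero h0) hadj1)
  obtain ⟨x, y, hxy, hNw⟩ := Set.ncard_eq_two.mp ((degN_eq_ncard H w) ▸ degw)
  have hb1 : q.getVert 1 = x ∨ q.getVert 1 = y := by
    have : q.getVert 1 ∈ ({x, y} : Set V) := hNw ▸ hadj1
    simpa using this
  -- the other neighbor c
  obtain ⟨c, hcadj, hcne⟩ : ∃ c, H.Adj w c ∧ c ≠ q.getVert 1 := by
    rcases hb1 with h | h
    · refine ⟨y, ?_, by rw [h]; exact hxy.symm⟩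
      have : y ∈ H.neighborSet w := by rw [hNw]; simp
      exact this
    · refine ⟨x, ?_, by rw [h]; exact hxy⟩
      have : x ∈ H.neighborSet w := by rw [hNw]; simp
      exact this
  have hcsupp : c ∈ q.support := by
    by_contra hns
    have hq' : (Walk.cons hcadj.symm q).IsPath := hq.cons hns
    have : q.length + 1 ∈ P := ⟨c, u, Walk.cons hcadj.symm q, hq', by simp⟩
    have := le_csSup hbdd this
    omega
  set t := q.takeUntil c hcsupp with ht
  have htp : t.IsPath := hq.takeUntil hcsupp
  have hedge : s(c, w) ∉ t.edges := by
    intro hmem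
    have : s(w, c) ∈ q.edges := by
      rw [Sym2.eq_swap]
      exact q.edges_takeUntil_subset hcsupp hmem
    exact hcne (eq_getVert_one_of_mem_edges q hq this)
  have hcyc : (Walk.cons hcadj.symm t).IsCycle :=
    (Walk.cons_isCycle_iff t hcadj.symm).mpr ⟨htp, hedge⟩
  have hlen3 : 3 ≤ t.length + 1 := by
    have := hcyc.three_le_length
    simpa using this
  -- build the permutation from l := t.support
  set l := t.support with hl
  have hlnd : l.Nodup := htp.support_nodup
  have hllen : l.length = t.length + 1 := Walk.length_support t
  have hchain : List.Chain' H.Adj l := Walk.isChain_adj_support t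
  have hlne : l ≠ [] := Walk.support_ne_nil t
  have h0len : 0 < l.length := by omega
  have hhead : l[0]'h0len = w := by
    have h' : l = w :: l.tail := Walk.support_eq_cons t
    rw [List.getElem_of_eq h' h0len]
    simp
  have hlast : l[l.length - 1]'(by omega) = c := by
    rw [← List.getLast_eq_getElem hlne]
    exact Walk.getLast_support t ▸ rfl
  have hadjidx : ∀ (j k : ℕ) (hj : j < l.length) (hk : k < l.length),
      k = (j + 1) % l.length → H.Adj (l[j]'hj) (l[k]'hk) := by
    intro j k hj hk hke
    rcases Nat.lt_or_ge (j + 1) l.length with hlt | hge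
    · have : k = j + 1 := by rw [hke]; exact Nat.mod_eq_of_lt hlt
      subst this
      have := List.isChain_iff_getElem.mp hchain j (by omega)
      simpa [List.get_eq_getElem] using this
    · have hj1 : j + 1 = l.length := by omega
      have hk0 : k = 0 := by rw [hke, hj1, Nat.mod_self]
      subst hk0
      have hjl : j = l.length - 1 := by omega
      subst hjl
      rw [hlast, hhead]
      exact hcadj.symm
  refine ⟨l.formPerm, ⟨w, ?_⟩, ?_⟩
  · rw [List.formPerm_apply_mem_ne_self_iff _ hlnd w ?hw]
    · omega
    case hw =>
      rw [← hhead]; exact List.getElem_mem _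
  · intro z hz
    have hzl : z ∈ l := by
      have := List.support_formPerm_le' l hz
      simpa using this
    obtain ⟨i, hi, hig⟩ := List.mem_iff_getElem.mp hzl
    subst hig
    have hfp : l.formPerm l[i] = l[(i + 1) % l.length]'(Nat.mod_lt _ (by omega)) :=
      List.formPerm_apply_getElem l hlnd i hi
    have hfp2 : l.formPerm (l.formPerm l[i]) = l[(i + 2) % l.length]'(Nat.mod_lt _ (by omega)) := by
      have h2 := List.formPerm_pow_apply_getElem l hlnd 2 i hi
      rw [show l.formPerm (l.formPerm l[i]) = (l.formPerm ^ 2) l[i] by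
        rw [pow_two, Equiv.Perm.mul_apply]]
      exact h2
    constructor
    · rw [hfp]
      exact hadjidx i _ hi _ rfl
    · rw [hfp2]
      intro heq
      have hinj := (List.Nodup.getElem_inj_iff hlnd).mp heq
      rcases Nat.lt_or_ge (i + 2) l.length with hlt | hge
      · rw [Nat.mod_eq_of_lt hlt] at hinj; omega
      · rcases Nat.eq_or_lt_of_le hge with heq2 | hlt2
        · rw [← heq2, Nat.mod_self] at hinj; omega
        · have h21 : i + 2 = l.length + 1 := by omega
          rw [h21, Nat.add_mod_left, Nat.mod_eq_of_lt (by omega)] at hinj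
          omega

/-- key fact: neighborhoods of oriented vertices -/
lemma neighborSet_eq_pair [Fintype V] {H : SimpleGraph V} {σ : Equiv.Perm V}
    (hσ : ∀ z, σ z ≠ z → H.Adj z (σ z) ∧ σ (σ z) ≠ z)
    (hdeg : ∀ v, degN H v = 0 ∨ degN H v = 2)
    {z : V} (hz : σ z ≠ z) : H.neighborSet z = {σ⁻¹ z, σ z} := by
  have hzadj := (hσ z hz).1
  have hz2 := (hσ z hz).2
  have hinvmem : σ⁻¹ z ∈ H.neighborSet z := by
    have hw : σ (σ⁻¹ z) = z := σ.apply_symm_apply z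
    have hwsupp : σ (σ⁻¹ z) ≠ σ⁻¹ z := by
      rw [hw]; intro he
      apply hz; conv_lhs => rw [he]
      rw [hw]
    have := (hσ _ hwsupp).1
    rw [hw] at this
    exact this.symm
  have hne : σ⁻¹ z ≠ σ z := by
    intro he
    apply hz2
    have h2 : σ (σ⁻¹ z) = z := σ.apply_symm_apply z
    rw [he] at h2
    exact h2
  have hdz : degN H z = 2 := (hdeg z).resolve_left
    (fun h0 => (not_adj_of_degN_zero h0) hzadj)
  have hsub : ({σ⁻¹ z, σ z} : Set V) ⊆ H.neighborSet z := by
    rintro w (rfl | rfl)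
    · exact hinvmem
    · exact hzadj
  have := Set.eq_of_subset_of_ncard_le hsub
    (by rw [← degN_eq_ncard, hdz, Set.ncard_pair hne]) (Set.toFinite _)
  exact this.symm

lemma exists_orientation [Fintype V] (H : SimpleGraph V)
    (hdeg : ∀ v, degN H v = 0 ∨ degN H v = 2) :
    ∃ σ : Equiv.Perm V, (∀ v, degN H v ≠ 2 → σ v = v) ∧
      ∀ v, degN H v = 2 → H.Adj v (σ v) ∧ σ (σ v) ≠ v := by
  classical
  suffices h : ∀ (n : ℕ) (H : SimpleGraph V), {v | degN H v = 2}.ncard = n →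
      (∀ v, degN H v = 0 ∨ degN H v = 2) →
      ∃ σ : Equiv.Perm V, (∀ v, degN H v ≠ 2 → σ v = v) ∧
        ∀ v, degN H v = 2 → H.Adj v (σ v) ∧ σ (σ v) ≠ v by
    exact h _ H rfl hdeg
  intro n
  induction n using Nat.strong_induction_on with
  | _ n IH =>
    intro H hcard hdeg
    by_cases hex : ∃ a, degN H a = 2
    · obtain ⟨a, ha⟩ := hex
      obtain ⟨σ₀, ⟨z₀, hz₀⟩, hσ₀⟩ := exists_cyclePerm hdeg ha
      have hdeg2 : ∀ z, σ₀ z ≠ z → degN H z = 2 := fun z hz =>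
        (hdeg z).resolve_left (fun h0 => (not_adj_of_degN_zero h0) (hσ₀ z hz).1)
      have hNz : ∀ z, σ₀ z ≠ z → H.neighborSet z = {σ₀⁻¹ z, σ₀ z} :=
        fun z hz => neighborSet_eq_pair hσ₀ hdeg hz
      have hfwd : ∀ z, σ₀ z ≠ z → σ₀ (σ₀ z) ≠ σ₀ z := fun z h he => h (σ₀.injective he)
      have hNsupp : ∀ z w, σ₀ z ≠ z → H.Adj z w → σ₀ w ≠ w := by
        intro z w hz hadj
        have : w ∈ H.neighborSet z := hadj
        rw [hNz z hz] at this
        rcases this with rfl | rfl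
        · intro he
          have h2 : σ₀ (σ₀⁻¹ z) = z := σ₀.apply_symm_apply z
          rw [h2] at he
          apply hz
          conv_lhs => rw [he]
          exact h2
        · exact hfwd z hz
      -- the graph with the support of σ₀ removed
      set H' : SimpleGraph V :=
        { Adj := fun x y => H.Adj x y ∧ σ₀ x = x ∧ σ₀ y = y
          symm := ⟨by rintro x y ⟨h1, h2, h3⟩; exact ⟨h1.symm, h3, h2⟩⟩
          loopless := ⟨fun x h => H.loopless.irrefl x h.1⟩ } with hH'
      have f2 : ∀ v, σ₀ v = v → H'.neighborSet v = H.neighborSet v := by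
        intro v hv
        ext w
        simp only [mem_neighborSet, hH']
        constructor
        · rintro ⟨h1, -, -⟩; exact h1
        · intro h1
          refine ⟨h1, hv, ?_⟩
          by_contra hw
          exact (hNsupp w v hw h1.symm) hv
      have f3 : ∀ v, σ₀ v ≠ v → H'.neighborSet v = ∅ := by
        intro v hv
        ext w
        simp only [mem_neighborSet, hH', Set.mem_empty_iff_false, iff_false]
        rintro ⟨-, h2, -⟩
        exact hv h2
      have hdeg' : ∀ v, degN H' v = 0 ∨ degN H' v = 2 := by
        intro v
        by_cases hv : σ₀ v = v
        · rw [degN_eq_ncard, f2 v hv, ← degN_eq_ncard]; exact hdeg v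
        · left; rw [degN_eq_ncard, f3 v hv]; simp
      have hss : {v | degN H' v = 2} ⊂ {v | degN H v = 2} := by
        constructor
        · intro v hv
          by_cases h : σ₀ v = v
          · have : degN H' v = degN H v := by
              rw [degN_eq_ncard, degN_eq_ncard, f2 v h]
            rw [Set.mem_setOf_eq, this] at hv
            exact hv
          · exfalso
            rw [Set.mem_setOf_eq, degN_eq_ncard, f3 v h] at hv
            simp at hv
        · intro hsub
          have h1 : degN H z₀ = 2 := hdeg2 z₀ hz₀
          have h2 := hsub h1
          rw [Set.mem_setOf_eq, degN_eq_ncard, f3 z₀ hz₀] at h2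
          simp at h2
      have hlt : {v | degN H' v = 2}.ncard < n := by
        rw [← hcard]
        exact Set.ncard_lt_ncard hss (Set.toFinite _)
      obtain ⟨σ₁, hσ₁fix, hσ₁adj⟩ := IH _ hlt H' rfl hdeg'
      have hfix0 : ∀ v, σ₀ v ≠ v → σ₁ v = v := by
        intro v hv
        apply hσ₁fix
        rw [degN_eq_ncard, f3 v hv]
        simp
      refine ⟨σ₀ * σ₁, ?_, ?_⟩
      · intro v hv
        have hv0 : σ₀ v = v := by
          by_contra h
          exact hv (hdeg2 v h)
        have hv1 : σ₁ v = v := by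
          apply hσ₁fix
          rw [degN_eq_ncard, f2 v hv0, ← degN_eq_ncard]
          exact hv
        simp [Equiv.Perm.mul_apply, hv1, hv0]
      · intro v hv2
        by_cases hv : σ₀ v = v
        · have hH'v : degN H' v = 2 := by
            rw [degN_eq_ncard, f2 v hv, ← degN_eq_ncard]; exact hv2
          obtain ⟨hadj', hne'⟩ := hσ₁adj v hH'v
          have h1 : σ₀ (σ₁ v) = σ₁ v := hadj'.2.2
          have hadjH : H.Adj v (σ₁ v) := hadj'.1
          have hd1 : degN H' (σ₁ v) = 2 := by
            rcases hdeg' (σ₁ v) with h | h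
            · exfalso
              exact (not_adj_of_degN_zero h) hadj'.symm
            · exact h
          obtain ⟨hadj'', -⟩ := hσ₁adj (σ₁ v) hd1
          have h2 : σ₀ (σ₁ (σ₁ v)) = σ₁ (σ₁ v) := hadj''.2.2
          constructor
          · show H.Adj v (σ₀ (σ₁ v))
            rw [h1]; exact hadjH
          · show σ₀ (σ₁ (σ₀ (σ₁ v))) ≠ v
            rw [h1, h2]
            exact hne'
        · have hv1 : σ₁ v = v := hfix0 v hv
          constructor
          · show H.Adj v (σ₀ (σ₁ v))
            rw [hv1]; exact (hσ₀ v hv).1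
          · show σ₀ (σ₁ (σ₀ (σ₁ v))) ≠ v
            rw [hv1, hfix0 _ (hfwd v hv)]
            exact (hσ₀ v hv).2
    · push_neg at hex
      refine ⟨1, fun v _ => rfl, fun v hv => absurd hv (hex v)⟩

/-- exchange surgery: u isolated, x,y deg-2 neighbors of u, σx ≁ y, σy ≁ x etc. -/
lemma exchange_surgery [Fintype V] {G H : SimpleGraph V} (hle : H ≤ G)
    (hdeg : ∀ v, degN H v = 0 ∨ degN H v = 2) {σ : Equiv.Perm V}
    (hAdjIff : ∀ x w, degN H x = 2 → (H.Adj x w ↔ w = σ⁻¹ x ∨ w = σ x))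
    {u x y : V} (hu : degN H u = 0) (hx2 : degN H x = 2) (hy2 : degN H y = 2)
    (hux : G.Adj u x) (huy : G.Adj u y) (hss : G.Adj (σ x) (σ y))
    (hxy : x ≠ y) (hsxy : σ x ≠ y) (hsyx : σ y ≠ x) (hsxsy : σ x ≠ σ y)
    (hsx2 : σ (σ x) ≠ x) (hsy2 : σ (σ y) ≠ y) :
    ∃ H₁ : SimpleGraph V, H₁ ≤ G ∧ (∀ v, degN H₁ v = 0 ∨ degN H₁ v = 2) ∧
      insert u {v | degN H v = 2} ⊆ {v | degN H₁ v = 2} := by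
  classical
  have hu' : ∀ w, ¬ H.Adj u w := fun w => not_adj_of_degN_zero hu
  have hdeg2adj : ∀ {a b : V}, H.Adj a b → degN H a = 2 := fun {a b} h =>
    (hdeg a).resolve_left (fun h0 => (not_adj_of_degN_zero h0) h)
  -- degrees of the relevant vertices
  have hxsx : H.Adj x (σ x) := by rw [hAdjIff x _ hx2]; right; rfl
  have hysy : H.Adj y (σ y) := by rw [hAdjIff y _ hy2]; right; rfl
  have hxix : H.Adj x (σ⁻¹ x) := by rw [hAdjIff x _ hx2]; left; rfl
  have hyiy : H.Adj y (σ⁻¹ y) := by rw [hAdjIff y _ hy2]; left; rfl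
  have hsx2d : degN H (σ x) = 2 := hdeg2adj hxsx.symm
  have hsy2d : degN H (σ y) = 2 := hdeg2adj hysy.symm
  have hix2d : degN H (σ⁻¹ x) = 2 := hdeg2adj hxix.symm
  have hiy2d : degN H (σ⁻¹ y) = 2 := hdeg2adj hyiy.symm
  -- u is distinct from all deg-2 vertices
  have hune : ∀ {z : V}, degN H z = 2 → u ≠ z := by
    rintro z hz rfl; rw [hu] at hz; omega
  have hux' : u ≠ x := hune hx2
  have huy' : u ≠ y := hune hy2
  have husx : u ≠ σ x := hune hsx2d
  have husy : u ≠ σ y := hune hsy2d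
  have huix : u ≠ σ⁻¹ x := hune hix2d
  have huiy : u ≠ σ⁻¹ y := hune hiy2d
  have hxsx' : x ≠ σ x := hxsx.ne
  have hysy' : y ≠ σ y := hysy.ne
  have hxisx : σ⁻¹ x ≠ σ x := by
    intro h
    apply hsx2
    rw [← h]; exact σ.apply_symm_apply _
  have hyisy : σ⁻¹ y ≠ σ y := by
    intro h
    apply hsy2
    rw [← h]; exact σ.apply_symm_apply _
  have hxsy : x ≠ σ y := fun h => hsyx h.symm
  have hysx : y ≠ σ x := fun h => hsxy h.symm
  have hssx : σ (σ x) ≠ σ y := fun h => hsxy (σ.injective h)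
  have hssy : σ (σ y) ≠ σ x := fun h => hsyx (σ.injective h)
  have hisxx : σ⁻¹ (σ x) = x := σ.symm_apply_apply x
  have hisyy : σ⁻¹ (σ y) = y := σ.symm_apply_apply y
  set A : Set (Sym2 V) := {s(u, x), s(u, y), s(σ x, σ y)} with hA
  set D : Set (Sym2 V) := {s(x, σ x), s(y, σ y)} with hD
  set H₁ := patch H A D with hH₁
  have hxix' : x ≠ σ⁻¹ x := hxix.ne
  have hsxssx : σ x ≠ σ (σ x) := fun h => hxsx' (σ.injective h)
  have hsyssy : σ y ≠ σ (σ y) := fun h => hysy' (σ.injective h)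
  have hyiy' : y ≠ σ⁻¹ y := hyiy.ne
  have hNu : H₁.neighborSet u = {x, y} := by
    rw [hH₁, patch_neighborSet]
    ext w
    simp only [Set.mem_setOf_eq, Set.mem_insert_iff, Set.mem_singleton_iff, hA, hD,
      Sym2.eq_iff]
    constructor
    · rintro ⟨hne, h⟩
      rcases h with ⟨hf, -⟩ | h
      · exact absurd hf (hu' w)
      · aesop
    · rintro (rfl | rfl)
      · exact ⟨hux', Or.inr (by aesop)⟩
      · exact ⟨huy', Or.inr (by aesop)⟩
  have hNx : H₁.neighborSet x = {σ⁻¹ x, u} := by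
    rw [hH₁, patch_neighborSet]
    ext w
    simp only [Set.mem_setOf_eq, Set.mem_insert_iff, Set.mem_singleton_iff, hA, hD,
      Sym2.eq_iff, hAdjIff x w hx2]
    constructor
    · rintro ⟨hne, h⟩
      aesop
    · rintro (rfl | rfl)
      · exact ⟨hxix', Or.inl (by aesop)⟩
      · exact ⟨hux'.symm, Or.inr (by aesop)⟩
  have hNy : H₁.neighborSet y = {σ⁻¹ y, u} := by
    rw [hH₁, patch_neighborSet]
    ext w
    simp only [Set.mem_setOf_eq, Set.mem_insert_iff, Set.mem_singleton_iff, hA, hD,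
      Sym2.eq_iff, hAdjIff y w hy2]
    constructor
    · rintro ⟨hne, h⟩
      aesop
    · rintro (rfl | rfl)
      · exact ⟨hyiy', Or.inl (by aesop)⟩
      · exact ⟨huy'.symm, Or.inr (by aesop)⟩
  have haxs : ∀ w, H.Adj (σ x) w ↔ (w = x ∨ w = σ (σ x)) := by
    intro w
    rw [hAdjIff _ w hsx2d, hisxx]
  have hays : ∀ w, H.Adj (σ y) w ↔ (w = y ∨ w = σ (σ y)) := by
    intro w
    rw [hAdjIff _ w hsy2d, hisyy]
  have hNsx : H₁.neighborSet (σ x) = {σ (σ x), σ y} := by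
    rw [hH₁, patch_neighborSet]
    ext w
    simp only [Set.mem_setOf_eq, Set.mem_insert_iff, Set.mem_singleton_iff, hA, hD,
      Sym2.eq_iff, haxs w]
    constructor
    · rintro ⟨hne, h⟩
      aesop
    · rintro (rfl | rfl)
      · refine ⟨hsxssx, Or.inl ⟨Or.inr rfl, ?_⟩⟩
        aesop
      · exact ⟨hsxsy, Or.inr (by aesop)⟩
  have hNsy : H₁.neighborSet (σ y) = {σ (σ y), σ x} := by
    rw [hH₁, patch_neighborSet]
    ext w
    simp only [Set.mem_setOf_eq, Set.mem_insert_iff, Set.mem_singleton_iff, hA, hD,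
      Sym2.eq_iff, hays w]
    constructor
    · rintro ⟨hne, h⟩
      aesop
    · rintro (rfl | rfl)
      · refine ⟨hsyssy, Or.inl ⟨Or.inr rfl, ?_⟩⟩
        aesop
      · exact ⟨hsxsy.symm, Or.inr (by aesop)⟩
  have huntouched : ∀ v, v ≠ u → v ≠ x → v ≠ y → v ≠ σ x → v ≠ σ y →
      H₁.neighborSet v = H.neighborSet v := by
    intro v h1 h2 h3 h4 h5
    rw [hH₁]
    apply patch_neighborSet_of_not_mem
    · rintro e he
      rw [hA] at he
      rcases he with rfl | rfl | rfl <;> rw [Sym2.mem_iff] <;> aesop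
    · rintro e he
      rw [hD] at he
      rcases he with rfl | rfl <;> rw [Sym2.mem_iff] <;> aesop
  have hd1u : degN H₁ u = 2 := by
    rw [degN_eq_ncard, hNu, Set.ncard_pair hxy]
  have hd1x : degN H₁ x = 2 := by
    rw [degN_eq_ncard, hNx, Set.ncard_pair huix.symm]
  have hd1y : degN H₁ y = 2 := by
    rw [degN_eq_ncard, hNy, Set.ncard_pair huiy.symm]
  have hd1sx : degN H₁ (σ x) = 2 := by
    rw [degN_eq_ncard, hNsx, Set.ncard_pair hssx]
  have hd1sy : degN H₁ (σ y) = 2 := by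
    rw [degN_eq_ncard, hNsy, Set.ncard_pair hssy]
  refine ⟨H₁, ?_, ?_, ?_⟩
  · rw [hH₁]
    apply patch_le hle
    rintro e he a b heq hne
    rw [hA] at he
    rcases he with rfl | rfl | rfl <;> rw [Sym2.eq_iff] at heq <;>
      rcases heq with ⟨rfl, rfl⟩ | ⟨rfl, rfl⟩
    · exact hux
    · exact hux.symm
    · exact huy
    · exact huy.symm
    · exact hss
    · exact hss.symm
  · intro v
    by_cases h1 : v = u; · subst h1; right; exact hd1u
    by_cases h2 : v = x; · subst h2; right; exact hd1x
    by_cases h3 : v = y; · subst h3; right; exact hd1y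
    by_cases h4 : v = σ x; · subst h4; right; exact hd1sx
    by_cases h5 : v = σ y; · subst h5; right; exact hd1sy
    rw [degN_eq_ncard, huntouched v h1 h2 h3 h4 h5, ← degN_eq_ncard]
    exact hdeg v
  · intro v hv
    rcases Set.mem_insert_iff.mp hv with rfl | hv2
    · exact hd1u
    · rw [Set.mem_setOf_eq] at hv2 ⊢
      by_cases h1 : v = u; · subst h1; exact hd1u
      by_cases h2 : v = x; · subst h2; exact hd1x
      by_cases h3 : v = y; · subst h3; exact hd1y
      by_cases h4 : v = σ x; · subst h4; exact hd1sx
      by_cases h5 : v = σ y; · subst h5; exact hd1sy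
      rw [degN_eq_ncard, huntouched v h1 h2 h3 h4 h5, ← degN_eq_ncard]
      exact hv2

/-- triangle surgery: u, r, r' isolated and pairwise G-adjacent. -/
lemma triangle_surgery [Fintype V] {G H : SimpleGraph V} (hle : H ≤ G)
    (hdeg : ∀ v, degN H v = 0 ∨ degN H v = 2)
    {u r r' : V} (hu : degN H u = 0) (hr : degN H r = 0) (hr' : degN H r' = 0)
    (hur : G.Adj u r) (hur' : G.Adj u r') (hrr' : G.Adj r r') :
    ∃ H₁ : SimpleGraph V, H₁ ≤ G ∧ (∀ v, degN H₁ v = 0 ∨ degN H₁ v = 2) ∧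
      insert u {v | degN H v = 2} ⊆ {v | degN H₁ v = 2} := by
  classical
  have hu' : ∀ w, ¬ H.Adj u w := fun w => not_adj_of_degN_zero hu
  have hra : ∀ w, ¬ H.Adj r w := fun w => not_adj_of_degN_zero hr
  have hra' : ∀ w, ¬ H.Adj r' w := fun w => not_adj_of_degN_zero hr'
  have h1 : u ≠ r := hur.ne
  have h2 : u ≠ r' := hur'.ne
  have h3 : r ≠ r' := hrr'.ne
  set A : Set (Sym2 V) := {s(u, r), s(u, r'), s(r, r')} with hA
  set D : Set (Sym2 V) := (∅ : Set (Sym2 V)) with hD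
  set H₁ := patch H A D with hH₁
  have hNu : H₁.neighborSet u = {r, r'} := by
    rw [hH₁, patch_neighborSet]
    ext w
    simp only [Set.mem_setOf_eq, Set.mem_insert_iff, Set.mem_singleton_iff, hA, hD,
      Sym2.eq_iff]
    constructor
    · rintro ⟨hne, h⟩
      rcases h with ⟨hf, -⟩ | h
      · exact absurd hf (hu' w)
      · aesop
    · rintro (rfl | rfl)
      · exact ⟨h1, Or.inr (by aesop)⟩
      · exact ⟨h2, Or.inr (by aesop)⟩
  have hNr : H₁.neighborSet r = {u, r'} := by
    rw [hH₁, patch_neighborSet]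
    ext w
    simp only [Set.mem_setOf_eq, Set.mem_insert_iff, Set.mem_singleton_iff, hA, hD,
      Sym2.eq_iff]
    constructor
    · rintro ⟨hne, h⟩
      rcases h with ⟨hf, -⟩ | h
      · exact absurd hf (hra w)
      · aesop
    · rintro (rfl | rfl)
      · exact ⟨h1.symm, Or.inr (by aesop)⟩
      · exact ⟨h3, Or.inr (by aesop)⟩
  have hNr' : H₁.neighborSet r' = {u, r} := by
    rw [hH₁, patch_neighborSet]
    ext w
    simp only [Set.mem_setOf_eq, Set.mem_insert_iff, Set.mem_singleton_iff, hA, hD,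
      Sym2.eq_iff]
    constructor
    · rintro ⟨hne, h⟩
      rcases h with ⟨hf, -⟩ | h
      · exact absurd hf (hra' w)
      · aesop
    · rintro (rfl | rfl)
      · exact ⟨h2.symm, Or.inr (by aesop)⟩
      · exact ⟨h3.symm, Or.inr (by aesop)⟩
  have huntouched : ∀ v, v ≠ u → v ≠ r → v ≠ r' →
      H₁.neighborSet v = H.neighborSet v := by
    intro v hv1 hv2 hv3
    rw [hH₁]
    apply patch_neighborSet_of_not_mem
    · rintro e he
      rw [hA] at he
      rcases he with rfl | rfl | rfl <;> rw [Sym2.mem_iff] <;> aesop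
    · rintro e he
      rw [hD] at he
      exact absurd he (Set.notMem_empty e)
  have hd1u : degN H₁ u = 2 := by rw [degN_eq_ncard, hNu, Set.ncard_pair h3]
  have hd1r : degN H₁ r = 2 := by rw [degN_eq_ncard, hNr, Set.ncard_pair h2]
  have hd1r' : degN H₁ r' = 2 := by rw [degN_eq_ncard, hNr', Set.ncard_pair h1]
  refine ⟨H₁, ?_, ?_, ?_⟩
  · rw [hH₁]
    apply patch_le hle
    rintro e he a b heq hne
    rw [hA] at he
    rcases he with rfl | rfl | rfl <;> rw [Sym2.eq_iff] at heq <;>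
      rcases heq with ⟨rfl, rfl⟩ | ⟨rfl, rfl⟩
    · exact hur
    · exact hur.symm
    · exact hur'
    · exact hur'.symm
    · exact hrr'
    · exact hrr'.symm
  · intro v
    by_cases hv1 : v = u; · subst hv1; right; exact hd1u
    by_cases hv2 : v = r; · subst hv2; right; exact hd1r
    by_cases hv3 : v = r'; · subst hv3; right; exact hd1r'
    rw [degN_eq_ncard, huntouched v hv1 hv2 hv3, ← degN_eq_ncard]
    exact hdeg v
  · intro v hv
    rcases Set.mem_insert_iff.mp hv with rfl | hv2
    · exact hd1u
    · rw [Set.mem_setOf_eq] at hv2 ⊢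
      by_cases hv1 : v = u; · subst hv1; exact hd1u
      by_cases hv2' : v = r; · subst hv2'; exact hd1r
      by_cases hv3 : v = r'; · subst hv3; exact hd1r'
      rw [degN_eq_ncard, huntouched v hv1 hv2' hv3, ← degN_eq_ncard]
      exact hv2

/-- insertion surgery: u isolated adjacent (in G) to both x and σ x. -/
lemma insertion_surgery [Fintype V] {G H : SimpleGraph V} (hle : H ≤ G)
    (hdeg : ∀ v, degN H v = 0 ∨ degN H v = 2) {σ : Equiv.Perm V}
    (hAdjIff : ∀ x w, degN H x = 2 → (H.Adj x w ↔ w = σ⁻¹ x ∨ w = σ x))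
    {u x : V} (hu : degN H u = 0) (hx2 : degN H x = 2)
    (hux : G.Adj u x) (husx : G.Adj u (σ x)) (hsx2 : σ (σ x) ≠ x) :
    ∃ H₁ : SimpleGraph V, H₁ ≤ G ∧ (∀ v, degN H₁ v = 0 ∨ degN H₁ v = 2) ∧
      insert u {v | degN H v = 2} ⊆ {v | degN H₁ v = 2} := by
  classical
  have hu' : ∀ w, ¬ H.Adj u w := fun w => not_adj_of_degN_zero hu
  have hdeg2adj : ∀ {a b : V}, H.Adj a b → degN H a = 2 := fun {a b} h =>
    (hdeg a).resolve_left (fun h0 => (not_adj_of_degN_zero h0) h)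
  have hxsx : H.Adj x (σ x) := by rw [hAdjIff x _ hx2]; right; rfl
  have hxix : H.Adj x (σ⁻¹ x) := by rw [hAdjIff x _ hx2]; left; rfl
  have hsx2d : degN H (σ x) = 2 := hdeg2adj hxsx.symm
  have hix2d : degN H (σ⁻¹ x) = 2 := hdeg2adj hxix.symm
  have hune : ∀ {z : V}, degN H z = 2 → u ≠ z := by
    rintro z hz rfl; rw [hu] at hz; omega
  have hux' : u ≠ x := hune hx2
  have husx' : u ≠ σ x := hune hsx2d
  have huix : u ≠ σ⁻¹ x := hune hix2d
  have hssx2d : degN H (σ (σ x)) = 2 := by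
    have : H.Adj (σ x) (σ (σ x)) := by rw [hAdjIff _ _ hsx2d]; right; rfl
    exact hdeg2adj this.symm
  have hussx : u ≠ σ (σ x) := hune hssx2d
  have hxsx' : x ≠ σ x := hxsx.ne
  have hxix' : x ≠ σ⁻¹ x := hxix.ne
  have hxisx : σ⁻¹ x ≠ σ x := by
    intro h
    apply hsx2
    rw [← h]; exact σ.apply_symm_apply _
  have hsxssx : σ x ≠ σ (σ x) := fun h => hxsx' (σ.injective h)
  have hisxx : σ⁻¹ (σ x) = x := σ.symm_apply_apply x
  set A : Set (Sym2 V) := {s(u, x), s(u, σ x)} with hA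
  set D : Set (Sym2 V) := {s(x, σ x)} with hD
  set H₁ := patch H A D with hH₁
  have hNu : H₁.neighborSet u = {x, σ x} := by
    rw [hH₁, patch_neighborSet]
    ext w
    simp only [Set.mem_setOf_eq, Set.mem_insert_iff, Set.mem_singleton_iff, hA, hD,
      Sym2.eq_iff]
    constructor
    · rintro ⟨hne, h⟩
      rcases h with ⟨hf, -⟩ | h
      · exact absurd hf (hu' w)
      · aesop
    · rintro (rfl | rfl)
      · exact ⟨hux', Or.inr (by aesop)⟩
      · exact ⟨husx', Or.inr (by aesop)⟩
  have hNx : H₁.neighborSet x = {σ⁻¹ x, u} := by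
    rw [hH₁, patch_neighborSet]
    ext w
    simp only [Set.mem_setOf_eq, Set.mem_insert_iff, Set.mem_singleton_iff, hA, hD,
      Sym2.eq_iff, hAdjIff x w hx2]
    constructor
    · rintro ⟨hne, h⟩
      aesop
    · rintro (rfl | rfl)
      · exact ⟨hxix', Or.inl (by aesop)⟩
      · exact ⟨hux'.symm, Or.inr (by aesop)⟩
  have haxs : ∀ w, H.Adj (σ x) w ↔ (w = x ∨ w = σ (σ x)) := by
    intro w
    rw [hAdjIff _ w hsx2d, hisxx]
  have hNsx : H₁.neighborSet (σ x) = {σ (σ x), u} := by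
    rw [hH₁, patch_neighborSet]
    ext w
    simp only [Set.mem_setOf_eq, Set.mem_insert_iff, Set.mem_singleton_iff, hA, hD,
      Sym2.eq_iff, haxs w]
    constructor
    · rintro ⟨hne, h⟩
      aesop
    · rintro (rfl | rfl)
      · exact ⟨hsxssx, Or.inl (by aesop)⟩
      · exact ⟨husx'.symm, Or.inr (by aesop)⟩
  have huntouched : ∀ v, v ≠ u → v ≠ x → v ≠ σ x →
      H₁.neighborSet v = H.neighborSet v := by
    intro v hv1 hv2 hv3
    rw [hH₁]
    apply patch_neighborSet_of_not_mem
    · rintro e he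
      rw [hA] at he
      rcases he with rfl | rfl <;> rw [Sym2.mem_iff] <;> aesop
    · rintro e he
      rw [hD] at he
      rcases he with rfl
      rw [Sym2.mem_iff]
      aesop
  have hd1u : degN H₁ u = 2 := by rw [degN_eq_ncard, hNu, Set.ncard_pair hxsx']
  have hd1x : degN H₁ x = 2 := by rw [degN_eq_ncard, hNx, Set.ncard_pair huix.symm]
  have hd1sx : degN H₁ (σ x) = 2 := by
    rw [degN_eq_ncard, hNsx, Set.ncard_pair hussx.symm]
  refine ⟨H₁, ?_, ?_, ?_⟩
  · rw [hH₁]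
    apply patch_le hle
    rintro e he a b heq hne
    rw [hA] at he
    rcases he with rfl | rfl <;> rw [Sym2.eq_iff] at heq <;>
      rcases heq with ⟨rfl, rfl⟩ | ⟨rfl, rfl⟩
    · exact hux
    · exact hux.symm
    · exact husx
    · exact husx.symm
  · intro v
    by_cases hv1 : v = u; · subst hv1; right; exact hd1u
    by_cases hv2 : v = x; · subst hv2; right; exact hd1x
    by_cases hv3 : v = σ x; · subst hv3; right; exact hd1sx
    rw [degN_eq_ncard, huntouched v hv1 hv2 hv3, ← degN_eq_ncard]
    exact hdeg v
  · intro v hv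
    rcases Set.mem_insert_iff.mp hv with rfl | hv2
    · exact hd1u
    · rw [Set.mem_setOf_eq] at hv2 ⊢
      by_cases hv1 : v = u; · subst hv1; exact hd1u
      by_cases hv2' : v = x; · subst hv2'; exact hd1x
      by_cases hv3 : v = σ x; · subst hv3; exact hd1sx
      rw [degN_eq_ncard, huntouched v hv1 hv2' hv3, ← degN_eq_ncard]
      exact hv2

/-- path-insertion surgery: u, r isolated, u G-adjacent to x and r,
r G-adjacent to σ x. -/
lemma rins_surgery [Fintype V] {G H : SimpleGraph V} (hle : H ≤ G)
    (hdeg : ∀ v, degN H v = 0 ∨ degN H v = 2) {σ : Equiv.Perm V}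
    (hAdjIff : ∀ x w, degN H x = 2 → (H.Adj x w ↔ w = σ⁻¹ x ∨ w = σ x))
    {u x r : V} (hu : degN H u = 0) (hx2 : degN H x = 2) (hr : degN H r = 0)
    (hux : G.Adj u x) (hur : G.Adj u r) (hrsx : G.Adj r (σ x)) (hsx2 : σ (σ x) ≠ x) :
    ∃ H₁ : SimpleGraph V, H₁ ≤ G ∧ (∀ v, degN H₁ v = 0 ∨ degN H₁ v = 2) ∧
      insert u {v | degN H v = 2} ⊆ {v | degN H₁ v = 2} := by
  classical
  have hu' : ∀ w, ¬ H.Adj u w := fun w => not_adj_of_degN_zero hu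
  have hra : ∀ w, ¬ H.Adj r w := fun w => not_adj_of_degN_zero hr
  have hdeg2adj : ∀ {a b : V}, H.Adj a b → degN H a = 2 := fun {a b} h =>
    (hdeg a).resolve_left (fun h0 => (not_adj_of_degN_zero h0) h)
  have hxsx : H.Adj x (σ x) := by rw [hAdjIff x _ hx2]; right; rfl
  have hxix : H.Adj x (σ⁻¹ x) := by rw [hAdjIff x _ hx2]; left; rfl
  have hsx2d : degN H (σ x) = 2 := hdeg2adj hxsx.symm
  have hix2d : degN H (σ⁻¹ x) = 2 := hdeg2adj hxix.symm
  have hssx2d : degN H (σ (σ x)) = 2 := by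
    have : H.Adj (σ x) (σ (σ x)) := by rw [hAdjIff _ _ hsx2d]; right; rfl
    exact hdeg2adj this.symm
  have hzne : ∀ {w z : V}, degN H w = 0 → degN H z = 2 → w ≠ z := by
    rintro w z hw hz rfl; rw [hw] at hz; omega
  have hux' : u ≠ x := hzne hu hx2
  have husx' : u ≠ σ x := hzne hu hsx2d
  have huix : u ≠ σ⁻¹ x := hzne hu hix2d
  have hussx : u ≠ σ (σ x) := hzne hu hssx2d
  have hrx : r ≠ x := hzne hr hx2
  have hrsx' : r ≠ σ x := hzne hr hsx2d
  have hrix : r ≠ σ⁻¹ x := hzne hr hix2d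
  have hrssx : r ≠ σ (σ x) := hzne hr hssx2d
  have hur' : u ≠ r := hur.ne
  have hxsx' : x ≠ σ x := hxsx.ne
  have hxix' : x ≠ σ⁻¹ x := hxix.ne
  have hxisx : σ⁻¹ x ≠ σ x := by
    intro h
    apply hsx2
    rw [← h]; exact σ.apply_symm_apply _
  have hsxssx : σ x ≠ σ (σ x) := fun h => hxsx' (σ.injective h)
  have hisxx : σ⁻¹ (σ x) = x := σ.symm_apply_apply x
  set A : Set (Sym2 V) := {s(u, x), s(u, r), s(r, σ x)} with hA
  set D : Set (Sym2 V) := {s(x, σ x)} with hD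
  set H₁ := patch H A D with hH₁
  have hNu : H₁.neighborSet u = {x, r} := by
    rw [hH₁, patch_neighborSet]
    ext w
    simp only [Set.mem_setOf_eq, Set.mem_insert_iff, Set.mem_singleton_iff, hA, hD,
      Sym2.eq_iff]
    constructor
    · rintro ⟨hne, h⟩
      rcases h with ⟨hf, -⟩ | h
      · exact absurd hf (hu' w)
      · aesop
    · rintro (rfl | rfl)
      · exact ⟨hux', Or.inr (by aesop)⟩
      · exact ⟨hur', Or.inr (by aesop)⟩
  have hNr : H₁.neighborSet r = {u, σ x} := by
    rw [hH₁, patch_neighborSet]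
    ext w
    simp only [Set.mem_setOf_eq, Set.mem_insert_iff, Set.mem_singleton_iff, hA, hD,
      Sym2.eq_iff]
    constructor
    · rintro ⟨hne, h⟩
      rcases h with ⟨hf, -⟩ | h
      · exact absurd hf (hra w)
      · aesop
    · rintro (rfl | rfl)
      · exact ⟨hur'.symm, Or.inr (by aesop)⟩
      · exact ⟨hrsx', Or.inr (by aesop)⟩
  have hNx : H₁.neighborSet x = {σ⁻¹ x, u} := by
    rw [hH₁, patch_neighborSet]
    ext w
    simp only [Set.mem_setOf_eq, Set.mem_insert_iff, Set.mem_singleton_iff, hA, hD,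
      Sym2.eq_iff, hAdjIff x w hx2]
    constructor
    · rintro ⟨hne, h⟩
      aesop
    · rintro (rfl | rfl)
      · exact ⟨hxix', Or.inl (by aesop)⟩
      · exact ⟨hux'.symm, Or.inr (by aesop)⟩
  have haxs : ∀ w, H.Adj (σ x) w ↔ (w = x ∨ w = σ (σ x)) := by
    intro w
    rw [hAdjIff _ w hsx2d, hisxx]
  have hNsx : H₁.neighborSet (σ x) = {σ (σ x), r} := by
    rw [hH₁, patch_neighborSet]
    ext w
    simp only [Set.mem_setOf_eq, Set.mem_insert_iff, Set.mem_singleton_iff, hA, hD,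
      Sym2.eq_iff, haxs w]
    constructor
    · rintro ⟨hne, h⟩
      aesop
    · rintro (rfl | rfl)
      · exact ⟨hsxssx, Or.inl (by aesop)⟩
      · exact ⟨hrsx'.symm, Or.inr (by aesop)⟩
  have huntouched : ∀ v, v ≠ u → v ≠ x → v ≠ r → v ≠ σ x →
      H₁.neighborSet v = H.neighborSet v := by
    intro v hv1 hv2 hv3 hv4
    rw [hH₁]
    apply patch_neighborSet_of_not_mem
    · rintro e he
      rw [hA] at he
      rcases he with rfl | rfl | rfl <;> rw [Sym2.mem_iff] <;> aesop
    · rintro e he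
      rw [hD] at he
      rcases he with rfl
      rw [Sym2.mem_iff]
      aesop
  have hd1u : degN H₁ u = 2 := by rw [degN_eq_ncard, hNu, Set.ncard_pair hrx.symm]
  have hd1x : degN H₁ x = 2 := by rw [degN_eq_ncard, hNx, Set.ncard_pair huix.symm]
  have hd1r : degN H₁ r = 2 := by rw [degN_eq_ncard, hNr, Set.ncard_pair husx']
  have hd1sx : degN H₁ (σ x) = 2 := by
    rw [degN_eq_ncard, hNsx, Set.ncard_pair hrssx.symm]
  refine ⟨H₁, ?_, ?_, ?_⟩
  · rw [hH₁]
    apply patch_le hle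
    rintro e he a b heq hne
    rw [hA] at he
    rcases he with rfl | rfl | rfl <;> rw [Sym2.eq_iff] at heq <;>
      rcases heq with ⟨rfl, rfl⟩ | ⟨rfl, rfl⟩
    · exact hux
    · exact hux.symm
    · exact hur
    · exact hur.symm
    · exact hrsx
    · exact hrsx.symm
  · intro v
    by_cases hv1 : v = u; · subst hv1; right; exact hd1u
    by_cases hv2 : v = x; · subst hv2; right; exact hd1x
    by_cases hv3 : v = r; · subst hv3; right; exact hd1r
    by_cases hv4 : v = σ x; · subst hv4; right; exact hd1sx
    rw [degN_eq_ncard, huntouched v hv1 hv2 hv3 hv4, ← degN_eq_ncard]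
    exact hdeg v
  · intro v hv
    rcases Set.mem_insert_iff.mp hv with rfl | hv2
    · exact hd1u
    · rw [Set.mem_setOf_eq] at hv2 ⊢
      by_cases hv1 : v = u; · subst hv1; exact hd1u
      by_cases hv2' : v = x; · subst hv2'; exact hd1x
      by_cases hv3 : v = r; · subst hv3; exact hd1r
      by_cases hv4 : v = σ x; · subst hv4; exact hd1sx
      rw [degN_eq_ncard, huntouched v hv1 hv2' hv3 hv4, ← degN_eq_ncard]
      exact hv2

end TwoFactorAux

open TwoFactorAux SimpleGraph in
/-- Every finite graph with `δ(G) ≥ α(G) + 1` has a 2-factor. -/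
theorem two_factor_of_minDeg_ge_indepNum_succ {V : Type*} [Fintype V] (G : SimpleGraph V)
    (h : indNum G + 1 ≤ minDeg G) :
    ∃ H : SimpleGraph V, IsTwoFactor G H := by
  classical
  by_contra hcon
  -- the extremal partial 2-factor H
  set K : Set ℕ := {n | ∃ H : SimpleGraph V,
      (H ≤ G ∧ ∀ v, degN H v = 0 ∨ degN H v = 2) ∧ {v | degN H v = 2}.ncard = n} with hK
  have hbotdeg : ∀ v : V, degN (⊥ : SimpleGraph V) v = 0 := by
    intro v
    rw [degN_eq_ncard, Set.ncard_eq_zero (Set.toFinite _)]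
    ext w
    simp
  have hKne : K.Nonempty := ⟨_, ⊥, ⟨bot_le, fun v => Or.inl (hbotdeg v)⟩, rfl⟩
  have hKbdd : BddAbove K := by
    refine ⟨Fintype.card V, ?_⟩
    rintro n ⟨H, -, rfl⟩
    calc {v | degN H v = 2}.ncard ≤ (Set.univ : Set V).ncard :=
          Set.ncard_le_ncard (Set.subset_univ _) (Set.toFinite _)
      _ = Fintype.card V := by rw [Set.ncard_univ, Nat.card_eq_fintype_card]
  obtain ⟨H, ⟨hle, hdeg⟩, hm⟩ := Nat.sSup_mem hKne hKbdd
  have hmax : ∀ H₁ : SimpleGraph V, H₁ ≤ G → (∀ v, degN H₁ v = 0 ∨ degN H₁ v = 2) →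
      {v | degN H₁ v = 2}.ncard ≤ sSup K := fun H₁ a b => le_csSup hKbdd ⟨H₁, ⟨a, b⟩, rfl⟩
  by_cases hall : ∀ v, degN H v = 2
  · exact hcon ⟨H, hle, hall⟩
  push_neg at hall
  obtain ⟨u, hu2⟩ := hall
  have hu0 : degN H u = 0 := (hdeg u).resolve_right hu2
  -- common contradiction builder
  have contra : ∀ H₁ : SimpleGraph V, H₁ ≤ G → (∀ v, degN H₁ v = 0 ∨ degN H₁ v = 2) →
      insert u {v | degN H v = 2} ⊆ {v | degN H₁ v = 2} → False := by
    intro H₁ c1 c2 c3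
    have h1 : (insert u {v | degN H v = 2}).ncard = sSup K + 1 := by
      rw [Set.ncard_insert_of_notMem (by simp [Set.mem_setOf_eq, hu0]) (Set.toFinite _), hm]
    have h2 := Set.ncard_le_ncard c3 (Set.toFinite _)
    have h3 := hmax H₁ c1 c2
    omega
  -- orientation of H
  obtain ⟨σ, hσfix, hσadj⟩ := exists_orientation H hdeg
  have hσ' : ∀ z, σ z ≠ z → H.Adj z (σ z) ∧ σ (σ z) ≠ z := fun z hz =>
    hσadj z (by by_contra h2; exact hz (hσfix z h2))
  have hsupne : ∀ x, degN H x = 2 → σ x ≠ x := fun x hx => (hσadj x hx).1.ne'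
  have hAdjIff : ∀ x w, degN H x = 2 → (H.Adj x w ↔ w = σ⁻¹ x ∨ w = σ x) := by
    intro x w hx
    rw [← SimpleGraph.mem_neighborSet, neighborSet_eq_pair hσ' hdeg (hsupne x hx)]
    simp [Set.mem_insert_iff, Set.mem_singleton_iff]
  have hdeg2adj : ∀ {a b : V}, H.Adj a b → degN H a = 2 := fun {a b} hadj =>
    (hdeg a).resolve_left (fun h0 => (not_adj_of_degN_zero h0) hadj)
  have hσdeg : ∀ z, degN H z = 2 → degN H (σ z) = 2 := fun z hz =>
    hdeg2adj ((hσadj z hz).1.symm)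
  -- the independent set S
  set φ : V → V := fun z => if degN H z = 2 then σ z else z with hφ
  set S : Set V := φ '' (G.neighborSet u) with hS
  have hinj : Set.InjOn φ (G.neighborSet u) := by
    intro p hp q hq hpq
    by_cases hp2 : degN H p = 2 <;> by_cases hq2 : degN H q = 2 <;>
      simp only [hφ, hp2, hq2, if_pos, if_neg, if_true, if_false] at hpq
    · exact σ.injective hpq
    · exact absurd (hpq ▸ hσdeg p hp2) hq2
    · exact absurd (hpq.symm ▸ hσdeg q hq2) hp2
    · exact hpq
  have hScard : S.ncard = degN G u := by
    rw [hS, Set.ncard_image_of_injOn hinj, ← degN_eq_ncard]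
  have hSind : IndepSet G S := by
    intro a ha b hb hne hGadj
    obtain ⟨p, hp, hpa⟩ := ha
    obtain ⟨q, hq, hqb⟩ := hb
    have hup : G.Adj u p := hp
    have huq : G.Adj u q := hq
    by_cases hp2 : degN H p = 2 <;> by_cases hq2 : degN H q = 2
    · -- both endpoints oriented: a = σ p, b = σ q
      have hpa' : a = σ p := by rw [← hpa, hφ]; simp [hp2]
      have hqb' : b = σ q := by rw [← hqb, hφ]; simp [hq2]
      subst hpa' hqb'
      by_cases hspq : σ p = q
      · obtain ⟨H₁, c1, c2, c3⟩ := insertion_surgery hle hdeg hAdjIff hu0 hp2 hup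
          (by rw [hspq]; exact huq) (hσadj p hp2).2
        exact contra H₁ c1 c2 c3
      by_cases hsqp : σ q = p
      · obtain ⟨H₁, c1, c2, c3⟩ := insertion_surgery hle hdeg hAdjIff hu0 hq2 huq
          (by rw [hsqp]; exact hup) (hσadj q hq2).2
        exact contra H₁ c1 c2 c3
      have hpq : p ≠ q := fun e => hne (by rw [e])
      obtain ⟨H₁, c1, c2, c3⟩ := exchange_surgery hle hdeg hAdjIff hu0 hp2 hq2 hup huq
        hGadj hpq hspq hsqp hne (hσadj p hp2).2 (hσadj q hq2).2
      exact contra H₁ c1 c2 c3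
    · -- a = σ p, b = q with q isolated
      have hq0 : degN H q = 0 := (hdeg q).resolve_right hq2
      have hpa' : a = σ p := by rw [← hpa, hφ]; simp [hp2]
      have hqb' : b = q := by rw [← hqb, hφ]; simp [hq2]
      subst hpa' hqb'
      obtain ⟨H₁, c1, c2, c3⟩ := rins_surgery hle hdeg hAdjIff hu0 hp2 hq0 hup huq
        hGadj.symm (hσadj p hp2).2
      exact contra H₁ c1 c2 c3
    · -- a = p isolated, b = σ q
      have hp0 : degN H p = 0 := (hdeg p).resolve_right hp2
      have hpa' : a = p := by rw [← hpa, hφ]; simp [hp2]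
      have hqb' : b = σ q := by rw [← hqb, hφ]; simp [hq2]
      subst hpa' hqb'
      obtain ⟨H₁, c1, c2, c3⟩ := rins_surgery hle hdeg hAdjIff hu0 hq2 hp0 huq hup
        hGadj (hσadj q hq2).2
      exact contra H₁ c1 c2 c3
    · -- both isolated
      have hp0 : degN H p = 0 := (hdeg p).resolve_right hp2
      have hq0 : degN H q = 0 := (hdeg q).resolve_right hq2
      have hpa' : a = p := by rw [← hpa, hφ]; simp [hp2]
      have hqb' : b = q := by rw [← hqb, hφ]; simp [hq2]
      subst hpa' hqb'
      obtain ⟨H₁, c1, c2, c3⟩ := triangle_surgery hle hdeg hu0 hp0 hq0 hup huq hGadj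
      exact contra H₁ c1 c2 c3
  -- final counting contradiction
  set I : Finset V := (Set.toFinite S).toFinset with hI
  have hIco : (↑I : Set V) = S := Set.Finite.coe_toFinset _
  have hIind : IndepSet G (↑I : Set V) := by rw [hIco]; exact hSind
  have hIcard : I.card = S.ncard := by
    rw [← hIco, Set.ncard_coe_finset]
  have hindbdd : BddAbove {n : ℕ | ∃ I : Finset V, IndepSet G ↑I ∧ I.card = n} := by
    refine ⟨Fintype.card V, ?_⟩
    rintro n ⟨J, -, rfl⟩
    exact J.card_le_univ
  have hle1 : I.card ≤ indNum G := le_csSup hindbdd ⟨I, hIind, rfl⟩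
  have hge : minDeg G ≤ degN G u := Nat.sInf_le ⟨u, rfl⟩
  omega
end

section
/- Every finite forest G has a pseudo 2-factor with exactly α(G) connected components, where α(G) is the independence number of G. -/
variable {V : Type*}

section AuxForestPTF
open SimpleGraph

lemma degN_eq_ncard (H : SimpleGraph V) (v : V) : degN H v = (H.neighborSet v).ncard :=
  Nat.card_coe_set_eq _

lemma one_le_degN [Fintype V] {H : SimpleGraph V} {u v : V} (h : H.Adj u v) : 1 ≤ degN H u := by
  rw [degN_eq_ncard]
  rw [Nat.one_le_iff_ne_zero, Ne, Set.ncard_eq_zero (Set.toFinite _)]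
  exact Set.nonempty_iff_ne_empty.mp ⟨v, h⟩

lemma indNum_bddAbove [Fintype V] (G : SimpleGraph V) :
    BddAbove {n : ℕ | ∃ I : Finset V, IndepSet G ↑I ∧ I.card = n} := by
  refine ⟨Fintype.card V, fun n hn => ?_⟩
  obtain ⟨I, _, rfl⟩ := hn
  exact I.card_le_univ

lemma indNum_nonempty (G : SimpleGraph V) :
    Set.Nonempty {n : ℕ | ∃ I : Finset V, IndepSet G ↑I ∧ I.card = n} :=
  ⟨0, ∅, by simp [IndepSet], by simp⟩

lemma card_le_indNum [Fintype V] {G : SimpleGraph V} {I : Finset V} (h : IndepSet G ↑I) :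
    I.card ≤ indNum G := le_csSup (indNum_bddAbove G) ⟨I, h, rfl⟩

lemma exists_indNum [Fintype V] (G : SimpleGraph V) :
    ∃ I : Finset V, IndepSet G ↑I ∧ I.card = indNum G :=
  Nat.sSup_mem (indNum_nonempty G) (indNum_bddAbove G)

lemma indNum_le_card [Fintype V] (G : SimpleGraph V) : indNum G ≤ Fintype.card V := by
  obtain ⟨I, _, hc⟩ := exists_indNum G
  rw [← hc]; exact I.card_le_univ

lemma indepSet_iff (G : SimpleGraph V) (I : Finset V) :
    IndepSet G ↑I ↔ ∀ x ∈ I, ∀ y ∈ I, ¬ G.Adj x y := by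
  constructor
  · intro h x hx y hy hadj
    exact h (by exact_mod_cast hx) (by exact_mod_cast hy) (G.ne_of_adj hadj) hadj
  · intro h x hx y hy _
    exact h x (by exact_mod_cast hx) y (by exact_mod_cast hy)

lemma indNum_of_edgeless [Fintype V] {G : SimpleGraph V} (h : ∀ x y, ¬ G.Adj x y) :
    indNum G = Fintype.card V := by
  classical
  refine le_antisymm (indNum_le_card G) ?_
  have : IndepSet G ↑(Finset.univ : Finset V) := by
    rw [indepSet_iff]
    intro x _ y _
    exact h x y
  simpa using card_le_indNum this

lemma exists_leaf [Fintype V] {G : SimpleGraph V} (hG : G.IsAcyclic)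
    {a b : V} (hab : G.Adj a b) :
    ∃ u v, G.Adj u v ∧ ∀ w, G.Adj u w → w = v := by
  classical
  set S : Set ℕ := {n | ∃ (u v : V) (p : G.Walk u v), p.IsPath ∧ p.length = n} with hS
  have hne : S.Nonempty := ⟨1, a, b, (SimpleGraph.Path.singleton hab).1,
    (SimpleGraph.Path.singleton hab).2, rfl⟩
  have hbdd : BddAbove S := by
    refine ⟨Fintype.card V, fun n hn => ?_⟩
    obtain ⟨u, v, p, hp, rfl⟩ := hn
    exact le_of_lt hp.length_lt
  obtain ⟨u, v, p, hp, hlen⟩ := Nat.sSup_mem hne hbdd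
  have hmax : ∀ m ∈ S, m ≤ sSup S := fun m hm => le_csSup hbdd hm
  have h1 : 1 ≤ sSup S := le_csSup hbdd ⟨a, b, (SimpleGraph.Path.singleton hab).1,
    (SimpleGraph.Path.singleton hab).2, rfl⟩
  cases p with
  | nil => simp only [SimpleGraph.Walk.length_nil] at hlen; omega
  | @cons _ u' _ h q =>
    refine ⟨u, u', h, fun w hw => ?_⟩
    by_cases hws : w ∈ (SimpleGraph.Walk.cons h q).support
    · have hne' : w ≠ u := fun e => G.irrefl (e ▸ hw)
      have htp : ((SimpleGraph.Walk.cons h q).takeUntil w hws).IsPath := hp.takeUntil hws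
      have := hG.path_unique ⟨(SimpleGraph.Walk.cons h q).takeUntil w hws, htp⟩
        (SimpleGraph.Path.singleton hw)
      have hwalk : (SimpleGraph.Walk.cons h q).takeUntil w hws
          = SimpleGraph.Walk.cons hw SimpleGraph.Walk.nil := congrArg Subtype.val this
      have hspec := SimpleGraph.Walk.take_spec (SimpleGraph.Walk.cons h q) hws
      rw [hwalk] at hspec
      have := congrArg (fun z => z.getVert 1) hspec
      simpa [SimpleGraph.Walk.getVert_cons_succ, SimpleGraph.Walk.getVert_zero] using this
    · exfalso
      have hp2 : (SimpleGraph.Walk.cons hw.symm (SimpleGraph.Walk.cons h q)).IsPath :=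
        (SimpleGraph.Walk.cons_isPath_iff _ _).2 ⟨hp, hws⟩
      have : ((SimpleGraph.Walk.cons hw.symm (SimpleGraph.Walk.cons h q)).length) ∈ S :=
        ⟨w, v, _, hp2, rfl⟩
      have := hmax _ this
      simp only [SimpleGraph.Walk.length_cons] at this hlen
      omega

lemma reachable_iff [Fintype V] {H : SimpleGraph V} (hH : ∀ v, degN H v ≤ 1) {x y : V} :
    H.Reachable x y ↔ x = y ∨ H.Adj x y := by
  classical
  constructor
  · intro h
    obtain ⟨w⟩ := h
    have hp := w.toPath.2
    set p := w.toPath.1 with hpdef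
    clear_value p
    cases p with
    | nil => exact Or.inl rfl
    | @cons _ b _ h q =>
      cases q with
      | nil => exact Or.inr h
      | @cons _ c _ h' r =>
        exfalso
        rw [SimpleGraph.Walk.cons_isPath_iff] at hp
        obtain ⟨hp', hxs⟩ := hp
        have hxc : x ≠ c := by
          intro e; subst e
          exact hxs (by simp [SimpleGraph.Walk.support_cons])
        have h2 : 2 ≤ degN H b := by
          rw [degN_eq_ncard]
          rw [show (2 : ℕ) = 1 + 1 from rfl]
          refine Nat.succ_le_of_lt ?_
          rw [Set.one_lt_ncard_iff (Set.toFinite _)]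
          exact ⟨x, c, h.symm, h', hxc⟩
        have := hH b
        omega
  · rintro (rfl | h)
    · exact Reachable.refl _
    · exact h.reachable

lemma matching_count [Fintype V] {H : SimpleGraph V} (hH : ∀ v, degN H v ≤ 1) :
    Nat.card H.ConnectedComponent + H.edgeSet.ncard = Fintype.card V := by
  classical
  haveI : Fintype H.ConnectedComponent := Fintype.ofFinite _
  set out : H.ConnectedComponent → V := Quot.out with hout
  have hmk : ∀ c : H.ConnectedComponent, H.connectedComponentMk (out c) = c :=
    fun c => Quot.out_eq c
  have hmem : ∀ (c : H.ConnectedComponent) (x : V),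
      H.connectedComponentMk x = c ↔ (x = out c ∨ H.Adj x (out c)) := by
    intro c x
    conv_lhs => rw [← hmk c]
    rw [SimpleGraph.ConnectedComponent.eq]
    exact reachable_iff hH
  have hdeg_eq : ∀ v, degN H v = H.degree v := by
    intro v
    rw [degN_eq_ncard, ← SimpleGraph.card_neighborFinset_eq_degree]
    exact Set.ncard_eq_toFinset_card' _
  set fib : H.ConnectedComponent → Finset V :=
    fun c => Finset.univ.filter (fun x => H.connectedComponentMk x = c) with hfib
  have hfib_eq : ∀ c, fib c = insert (out c) (H.neighborFinset (out c)) := by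
    intro c
    ext x
    simp only [hfib, Finset.mem_filter, Finset.mem_univ, true_and, Finset.mem_insert,
      SimpleGraph.mem_neighborFinset, hmem c x]
    rw [adj_comm]
  have hfibcard : ∀ c, (fib c).card = 1 + degN H (out c) := by
    intro c
    rw [hfib_eq c, Finset.card_insert_of_notMem (by simp), hdeg_eq]
    rw [SimpleGraph.card_neighborFinset_eq_degree]
    omega
  have hfibsum : ∀ c, ∑ x ∈ fib c, degN H x = 2 * degN H (out c) := by
    intro c
    have hd := hH (out c)
    interval_cases hdc : degN H (out c)
    · have hns : H.neighborSet (out c) = ∅ := by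
        rw [← Set.ncard_eq_zero (Set.toFinite _), ← degN_eq_ncard]; exact hdc
      have : H.neighborFinset (out c) = ∅ := by
        simp [SimpleGraph.neighborFinset, hns]
      rw [hfib_eq c, this]
      simp [hdc]
    · obtain ⟨w, hw⟩ := Set.ncard_eq_one.mp (by rw [← degN_eq_ncard]; exact hdc)
      have hadj : H.Adj (out c) w := by
        have : w ∈ H.neighborSet (out c) := by rw [hw]; exact rfl
        exact this
      have hwne : w ≠ out c := fun e => H.irrefl (e ▸ hadj)
      have hdw : degN H w = 1 := le_antisymm (hH w) (one_le_degN hadj.symm)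
      have : H.neighborFinset (out c) = {w} := by
        simp [SimpleGraph.neighborFinset, hw]
      rw [hfib_eq c, this]
      rw [Finset.sum_insert (by simp [hwne.symm])]
      simp [hdc, hdw]
  have h1 : Fintype.card V = ∑ c : H.ConnectedComponent, (fib c).card := by
    rw [← Finset.card_univ]
    exact Finset.card_eq_sum_card_fiberwise (fun x _ => Finset.mem_univ _)
  have h2 : ∑ v, degN H v = ∑ c : H.ConnectedComponent, ∑ x ∈ fib c, degN H x :=
    (Finset.sum_fiberwise_of_maps_to (fun x _ => Finset.mem_univ _) _).symm
  have h3 : ∑ v, degN H v = 2 * H.edgeSet.ncard := by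
    rw [show H.edgeSet.ncard = H.edgeFinset.card from (Set.ncard_eq_toFinset_card' _)]
    rw [← SimpleGraph.sum_degrees_eq_twice_card_edges]
    exact Finset.sum_congr rfl (fun v _ => hdeg_eq v)
  have h4 : ∑ c : H.ConnectedComponent, ∑ x ∈ fib c, degN H x
      = 2 * ∑ c : H.ConnectedComponent, degN H (out c) := by
    rw [Finset.mul_sum]
    exact Finset.sum_congr rfl (fun c _ => hfibsum c)
  have h5 : ∑ c : H.ConnectedComponent, (fib c).card
      = Fintype.card H.ConnectedComponent + ∑ c : H.ConnectedComponent, degN H (out c) := by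
    rw [← Finset.card_univ, Finset.card_eq_sum_ones, ← Finset.sum_add_distrib]
    exact Finset.sum_congr rfl (fun c _ => hfibcard c)
  have he : H.edgeSet.ncard = ∑ c : H.ConnectedComponent, degN H (out c) := by
    have := h2.symm.trans h3
    rw [h4] at this
    omega
  rw [Nat.card_eq_fintype_card, he, h1, h5]

lemma indNum_delete [Fintype V] {G : SimpleGraph V} {u v : V} (huv : G.Adj u v)
    (hleaf : ∀ w, G.Adj u w → w = v)
    (G' : SimpleGraph V)
    (hG' : ∀ x y, G'.Adj x y ↔ G.Adj x y ∧ x ≠ u ∧ x ≠ v ∧ y ≠ u ∧ y ≠ v) :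
    indNum G' = indNum G + 1 := by
  classical
  have huvne : u ≠ v := G.ne_of_adj huv
  apply le_antisymm
  · obtain ⟨I', hI', hc'⟩ := exists_indNum G'
    set J := insert u (I' \ {u, v}) with hJ
    have hJind : IndepSet G ↑J := by
      rw [indepSet_iff]
      intro x hx y hy hadj
      simp only [hJ, Finset.mem_insert, Finset.mem_sdiff, Finset.mem_insert,
        Finset.mem_singleton, not_or] at hx hy
      rcases hx with rfl | ⟨hxI, hxu, hxv⟩
      · rcases hy with rfl | ⟨hyI, hyu, hyv⟩
        · exact G.irrefl hadj
        · exact hyv (hleaf y hadj)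
      · rcases hy with rfl | ⟨hyI, hyu, hyv⟩
        · exact hxv (hleaf x hadj.symm)
        · have : G'.Adj x y := (hG' x y).2 ⟨hadj, hxu, hxv, hyu, hyv⟩
          exact (indepSet_iff G' I').1 hI' x hxI y hyI this
    have hcJ : I'.card ≤ J.card + 1 := by
      have h1 : J.card = (I' \ {u, v}).card + 1 := by
        rw [hJ, Finset.card_insert_of_notMem (by simp)]
      have h2 : I'.card - 2 ≤ (I' \ {u, v}).card := by
        have := Finset.le_card_sdiff ({u, v} : Finset V) I'
        have hc2 : ({u, v} : Finset V).card ≤ 2 := Finset.card_insert_le _ _ |>.trans (by simp)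
        omega
      omega
    have := card_le_indNum hJind
    omega
  · obtain ⟨I, hI, hc⟩ := exists_indNum G
    set J := insert u (insert v (I \ {u, v})) with hJ
    have hJind : IndepSet G' ↑J := by
      rw [indepSet_iff]
      intro x hx y hy hadj
      rw [hG'] at hadj
      obtain ⟨hadj, hxu, hxv, hyu, hyv⟩ := hadj
      simp only [hJ, Finset.mem_insert, Finset.mem_sdiff, Finset.mem_singleton, not_or] at hx hy
      rcases hx with rfl | rfl | ⟨hxI, _, _⟩
      · exact hxu rfl
      · exact hxv rfl
      rcases hy with rfl | rfl | ⟨hyI, _, _⟩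
      · exact hyu rfl
      · exact hyv rfl
      exact (indepSet_iff G I).1 hI x hxI y hyI hadj
    have hinter : (I ∩ {u, v}).card ≤ 1 := by
      rw [Finset.card_le_one]
      intro a ha b hb
      simp only [Finset.mem_inter, Finset.mem_insert, Finset.mem_singleton] at ha hb
      obtain ⟨haI, ha2⟩ := ha
      obtain ⟨hbI, hb2⟩ := hb
      by_contra hne
      have : ¬ G.Adj u v := by
        rcases ha2 with rfl | rfl <;> rcases hb2 with rfl | rfl
        · exact absurd rfl hne
        · exact fun h => (indepSet_iff G I).1 hI a haI b hbI h
        · exact fun h => (indepSet_iff G I).1 hI b hbI a haI h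
        · exact absurd rfl hne
      exact this huv
    have hsd : (I \ {u, v}).card + (I ∩ {u, v}).card = I.card :=
      Finset.card_sdiff_add_card_inter I {u, v}
    have hJcard : J.card = (I \ {u, v}).card + 2 := by
      rw [hJ, Finset.card_insert_of_notMem (by simp [huvne]),
        Finset.card_insert_of_notMem (by simp)]
    have := card_le_indNum hJind
    omega

lemma main_aux [Fintype V] :
    ∀ (k : ℕ) (G : SimpleGraph V), G.IsAcyclic → G.edgeSet.ncard ≤ k →
    ∃ H : SimpleGraph V, H ≤ G ∧ (∀ v, degN H v ≤ 1) ∧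
      indNum G + H.edgeSet.ncard = Fintype.card V := by
  classical
  have edgeless : ∀ G : SimpleGraph V, (∀ x y, ¬ G.Adj x y) →
      ∃ H : SimpleGraph V, H ≤ G ∧ (∀ v, degN H v ≤ 1) ∧
        indNum G + H.edgeSet.ncard = Fintype.card V := by
    intro G hG
    refine ⟨⊥, bot_le, fun v => ?_, ?_⟩
    · have : (⊥ : SimpleGraph V).neighborSet v = ∅ := by ext y; simp
      rw [degN_eq_ncard, this]
      simp
    · rw [indNum_of_edgeless hG]
      simp
  intro k
  induction k with
  | zero =>
    intro G _ hcard
    apply edgeless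
    intro x y hadj
    have : s(x, y) ∈ G.edgeSet := hadj
    have hempty : G.edgeSet = ∅ := by
      rw [← Set.ncard_eq_zero (Set.toFinite _)]
      omega
    rw [hempty] at this
    exact this
  | succ k ih =>
    intro G hac hcard
    by_cases hE : ∃ x y, G.Adj x y
    · obtain ⟨a, b, hab⟩ := hE
      obtain ⟨u, v, huv, hleaf⟩ := exists_leaf hac hab
      have huvne : u ≠ v := G.ne_of_adj huv
      -- delete all edges at u and v
      set G' : SimpleGraph V :=
        { Adj := fun x y => G.Adj x y ∧ x ≠ u ∧ x ≠ v ∧ y ≠ u ∧ y ≠ v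
          symm := ⟨by
            intro x y ⟨h1, h2, h3, h4, h5⟩
            exact ⟨h1.symm, h4, h5, h2, h3⟩⟩
          loopless := ⟨fun x ⟨h1, _⟩ => G.irrefl h1⟩ } with hG'def
      have hG'adj : ∀ x y, G'.Adj x y ↔ G.Adj x y ∧ x ≠ u ∧ x ≠ v ∧ y ≠ u ∧ y ≠ v :=
        fun x y => Iff.rfl
      have hG'le : G' ≤ G := fun x y h => h.1
      have hG'ac : G'.IsAcyclic := fun w c hc => hac (c.mapLe hG'le) (hc.mapLe hG'le)
      have hedgesub : G'.edgeSet ⊆ G.edgeSet := SimpleGraph.edgeSet_mono hG'le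
      have huvmem : s(u, v) ∈ G.edgeSet := huv
      have huvnotmem : s(u, v) ∉ G'.edgeSet := by
        intro h
        have : G'.Adj u v := h
        exact (this.2.1) rfl
      have hlt : G'.edgeSet.ncard < G.edgeSet.ncard :=
        Set.ncard_lt_ncard (Set.ssubset_iff_of_subset hedgesub |>.2 ⟨s(u,v), huvmem, huvnotmem⟩)
          (Set.toFinite _)
      obtain ⟨H', hH'le, hH'deg, hH'count⟩ := ih G' hG'ac (by omega)
      -- H' has no edges at u or v
      have hH'uv : ∀ x y, H'.Adj x y → x ≠ u ∧ x ≠ v := by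
        intro x y h
        have := hH'le h
        exact ⟨this.2.1, this.2.2.1⟩
      set H : SimpleGraph V := H' ⊔ SimpleGraph.fromEdgeSet {s(u, v)} with hHdef
      have hHadj : ∀ x y, H.Adj x y ↔ H'.Adj x y ∨ (s(x, y) = s(u, v) ∧ x ≠ y) := by
        intro x y
        simp [hHdef, SimpleGraph.fromEdgeSet_adj]
      have hHle : H ≤ G := by
        intro x y h
        rcases (hHadj x y).1 h with h | ⟨he, hne⟩
        · exact hG'le (hH'le h)
        · rw [Sym2.eq_iff] at he
          rcases he with ⟨rfl, rfl⟩ | ⟨rfl, rfl⟩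
          · exact huv
          · exact huv.symm
      have hnbr : ∀ x, x ≠ u → x ≠ v → H.neighborSet x = H'.neighborSet x := by
        intro x hxu hxv
        ext y
        simp only [SimpleGraph.mem_neighborSet]
        rw [hHadj]
        constructor
        · rintro (h | ⟨he, _⟩)
          · exact h
          · rw [Sym2.eq_iff] at he
            rcases he with ⟨h1, h2⟩ | ⟨h1, h2⟩
            · exact absurd h1 hxu
            · exact absurd h1 hxv
        · exact Or.inl
      have hnbru : H.neighborSet u = {v} := by
        ext y
        simp only [SimpleGraph.mem_neighborSet, Set.mem_singleton_iff]
        rw [hHadj]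
        constructor
        · rintro (h | ⟨he, hne⟩)
          · exact absurd rfl (hH'uv u y h).1
          · rw [Sym2.eq_iff] at he
            rcases he with ⟨-, h2⟩ | ⟨h1, h2⟩
            · exact h2
            · exact absurd h1 huvne
        · rintro rfl
          exact Or.inr ⟨rfl, huvne⟩
      have hnbrv : H.neighborSet v = {u} := by
        ext y
        simp only [SimpleGraph.mem_neighborSet, Set.mem_singleton_iff]
        rw [hHadj]
        constructor
        · rintro (h | ⟨he, hne⟩)
          · exact absurd rfl (hH'uv v y h).2
          · rw [Sym2.eq_iff] at he
            rcases he with ⟨h1, h2⟩ | ⟨-, h2⟩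
            · exact absurd h1 huvne.symm
            · exact h2
        · rintro rfl
          exact Or.inr ⟨Sym2.eq_swap, huvne.symm⟩
      have hHdeg : ∀ x, degN H x ≤ 1 := by
        intro x
        by_cases hxu : x = u
        · subst hxu
          rw [degN_eq_ncard, hnbru]
          simp
        by_cases hxv : x = v
        · subst hxv
          rw [degN_eq_ncard, hnbrv]
          simp
        · rw [degN_eq_ncard, hnbr x hxu hxv, ← degN_eq_ncard]
          exact hH'deg x
      have hHedge : H.edgeSet = insert s(u, v) H'.edgeSet := by
        rw [hHdef, SimpleGraph.edgeSet_sup, SimpleGraph.edgeSet_fromEdgeSet]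
        rw [Set.union_comm]
        have : ({s(u, v)} : Set (Sym2 V)) \ {e | e.IsDiag} = {s(u, v)} := by
          ext e
          simp only [Set.mem_diff, Set.mem_singleton_iff, Set.mem_setOf_eq, and_iff_left_iff_imp]
          rintro rfl
          exact fun he2 => huvne (Sym2.isDiag_iff_proj_eq |>.1 he2)
        rw [show Sym2.diagSet = {e : Sym2 V | e.IsDiag} from rfl, this, Set.singleton_union]
      have huvnotH' : s(u, v) ∉ H'.edgeSet := by
        intro h
        exact (hH'uv u v h).1 rfl
      have hHcard : H.edgeSet.ncard = H'.edgeSet.ncard + 1 := by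
        rw [hHedge, Set.ncard_insert_of_notMem huvnotH' (Set.toFinite _)]
      have hind : indNum G' = indNum G + 1 := indNum_delete huv hleaf G' hG'adj
      exact ⟨H, hHle, hHdeg, by omega⟩
    · push_neg at hE
      exact edgeless G hE
end AuxForestPTF

/-- Every finite forest `G` has a pseudo 2-factor with exactly `α(G)` components;
in particular it has a pseudo 2-factor with at most `f(G)` components. -/

theorem forest_pseudo_two_factor_alpha_components {V : Type*} [Fintype V] (G : SimpleGraph V)
    (hG : G.IsAcyclic) :
    ∃ H : SimpleGraph V, IsPseudoTwoFactor G H ∧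
      Nat.card H.ConnectedComponent = indNum G := by
  obtain ⟨H, hle, hdeg, hcount⟩ := main_aux G.edgeSet.ncard G hG le_rfl
  refine ⟨H, ⟨hle, fun v => (hdeg v).trans one_le_two, fun a b hadj => ?_⟩, ?_⟩
  · have ha : degN H a = 1 := le_antisymm (hdeg a) (one_le_degN hadj)
    have hb : degN H b = 1 := le_antisymm (hdeg b) (one_le_degN hadj.symm)
    rw [ha, hb]
  · have := matching_count hdeg
    omega
end

section
/- Let H be a finite simple graph with at least one vertex and let p ≥ |V(H)| + 1 be an integer. Let G_1 be the graph obtained from the disjoint union of H and p disjoint copies of K_2 by adding all edges between V(H) and the vertices of the copies of K_2. Then every pseudo 2-factor of G_1 has at least p − |V(H)| non-cycle components. -/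
variable {V : Type*}

/-- The graph obtained by joining `H` with `p` disjoint copies of `K₂`
(on vertex set `Fin p × Fin 2`, copy `i` consisting of `(i,0)` and `(i,1)`). -/
def joinK2 (V : Type*) (H : SimpleGraph V) (p : ℕ) : SimpleGraph (V ⊕ Fin p × Fin 2) where
  Adj x y :=
    match x, y with
    | Sum.inl a, Sum.inl b => H.Adj a b
    | Sum.inl _, Sum.inr _ => True
    | Sum.inr _, Sum.inl _ => True
    | Sum.inr a, Sum.inr b => a.1 = b.1 ∧ a.2 ≠ b.2
  symm := by
    constructor
    rintro (a | a) (b | b) h <;> simp_all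
    · exact h.symm
    · exact fun hba => h.2 hba.symm
  loopless := by
    constructor
    rintro (a | a) h <;> simp_all


lemma degN_eq_degree {W : Type*} [Fintype W] (F : SimpleGraph W) [DecidableRel F.Adj]
    (v : W) : degN F v = F.degree v := by
  simp [degN, Nat.card_eq_fintype_card, ← SimpleGraph.card_neighborSet_eq_degree]

lemma deg_walk {W : Type*} [Fintype W] (F : SimpleGraph W) [DecidableRel F.Adj]
    (hc : ∀ u v, F.Adj u v → F.degree u = F.degree v) :
    ∀ {u v : W}, F.Walk u v → F.degree u ≤ 1 → u = v ∨ F.Adj u v := by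
  intro u v w
  induction w with
  | nil => exact fun _ => Or.inl rfl
  | @cons u w' v h p ih =>
    intro hu
    have hw' : F.degree w' ≤ 1 := by rw [← hc u w' h]; exact hu
    rcases ih hw' with rfl | hadj
    · exact Or.inr h
    · left
      have h1 : F.degree w' = 1 := le_antisymm hw'
        (SimpleGraph.degree_pos_iff_exists_adj F w' |>.2 ⟨v, hadj⟩)
      have hu' : u ∈ F.neighborFinset w' := by
        simp [SimpleGraph.mem_neighborFinset]; exact h.symm
      have hv' : v ∈ F.neighborFinset w' := by
        simp [SimpleGraph.mem_neighborFinset]; exact hadj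
      exact Finset.card_le_one.1 (le_of_eq h1) u hu' v hv'

/-- For `H` with at least one vertex and `p ≥ |V(H)| + 1`, every pseudo 2-factor of
the join `G₁` of `H` with `p` disjoint copies of `K₂` has at least `p - |V(H)|`
non-cycle components. -/
theorem joinK2_pseudo_two_factor_lower_bound {V : Type*} [Fintype V] [Nonempty V]
    (H : SimpleGraph V) (p : ℕ) (hp : Fintype.card V + 1 ≤ p)
    (F : SimpleGraph (V ⊕ Fin p × Fin 2)) (hF : IsPseudoTwoFactor (joinK2 V H p) F) :
    p - Fintype.card V ≤ nonCycleCount F := by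
  classical
  obtain ⟨hle, hd2, hc⟩ := hF
  have hd2' : ∀ v : V ⊕ Fin p × Fin 2, F.degree v ≤ 2 := fun v => by rw [← degN_eq_degree]; exact hd2 v
  have hc' : ∀ u v : V ⊕ Fin p × Fin 2, F.Adj u v → F.degree u = F.degree v := fun u v h => by
    rw [← degN_eq_degree, ← degN_eq_degree]; exact hc u v h
  -- bad pairs
  set B : Finset (Fin p) :=
    Finset.univ.filter (fun i => ∃ a, F.degree (Sum.inr (i, a)) ≤ 1) with hB
  -- Step A : p ≤ |V| + |B|
  have stepA : p ≤ Fintype.card V + B.card := by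
    set T : Finset ((Fin p × Fin 2) × V) :=
      Finset.univ.filter (fun x => F.Adj (Sum.inr x.1) (Sum.inl x.2)) with hT
    -- upper bound
    have hub : T.card ≤ 2 * Fintype.card V := by
      have hfib : T.card = ∑ v : V, (T.filter fun x => x.2 = v).card :=
        Finset.card_eq_sum_card_fiberwise (fun x _ => Finset.mem_univ _)
      rw [hfib]
      have : ∀ v : V, (T.filter fun x => x.2 = v).card ≤ 2 := by
        intro v
        have hinj : (T.filter fun x => x.2 = v).card ≤ (F.neighborFinset (Sum.inl v)).card := by
          apply Finset.card_le_card_of_injOn (fun x => Sum.inr x.1)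
          · intro x hx
            simp only [Finset.mem_coe, Finset.mem_filter, hT, Finset.mem_univ, true_and] at hx
            rw [Finset.mem_coe, SimpleGraph.mem_neighborFinset]
            exact (hx.2 ▸ hx.1.symm)
          · intro x hx y hy hxy
            simp only [Finset.mem_coe, Finset.mem_filter] at hx hy
            have : x.1 = y.1 := by simpa using hxy
            exact Prod.ext this (hx.2.trans hy.2.symm)
        calc (T.filter fun x => x.2 = v).card ≤ (F.neighborFinset (Sum.inl v)).card := hinj
          _ = F.degree (Sum.inl v) := rfl
          _ ≤ 2 := hd2' _
      calc (∑ v : V, (T.filter fun x => x.2 = v).card) ≤ ∑ _v : V, 2 :=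
            Finset.sum_le_sum (fun v _ => this v)
        _ = 2 * Fintype.card V := by simp [Nat.mul_comm]
    -- lower bound
    have hlb : (p - B.card) * 2 ≤ T.card := by
      have hfib : T.card = ∑ x : Fin p × Fin 2, (T.filter fun y => y.1 = x).card :=
        Finset.card_eq_sum_card_fiberwise (fun x _ => Finset.mem_univ _)
      -- each good pair vertex has an inl-neighbor
      have hgood : ∀ x : Fin p × Fin 2, x.1 ∉ B → 1 ≤ (T.filter fun y => y.1 = x).card := by
        intro x hx
        have hdx : ¬ F.degree (Sum.inr x) ≤ 1 := by
          simp only [hB, Finset.mem_filter, Finset.mem_univ, true_and, not_exists] at hx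
          exact hx x.2
        have hex : ∃ v : V, F.Adj (Sum.inr x) (Sum.inl v) := by
          by_contra hno
          push_neg at hno
          apply hdx
          apply Finset.card_le_one.2
          intro a ha b hb
          rw [SimpleGraph.mem_neighborFinset] at ha hb
          match a, b with
          | Sum.inl a, _ => exact absurd ha (hno a)
          | _, Sum.inl b => exact absurd hb (hno b)
          | Sum.inr a, Sum.inr b =>
            have ha' := hle ha
            have hb' := hle hb
            simp only [joinK2] at ha' hb'
            obtain ⟨ha1, ha2⟩ := ha'
            obtain ⟨hb1, hb2⟩ := hb'
            have : a.2 = b.2 := by omega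
            rw [Prod.ext (ha1.symm.trans hb1) this]
        obtain ⟨v, hv⟩ := hex
        apply Finset.card_pos.2
        exact ⟨(x, v), by simp [hT, hv]⟩
      have hsub : ((Finset.univ \ B) ×ˢ (Finset.univ : Finset (Fin 2))).card ≤
          ∑ x : Fin p × Fin 2, (T.filter fun y => y.1 = x).card := by
        calc ((Finset.univ \ B) ×ˢ (Finset.univ : Finset (Fin 2))).card
            = ∑ x ∈ (Finset.univ \ B) ×ˢ (Finset.univ : Finset (Fin 2)), 1 := by simp
          _ ≤ ∑ x ∈ (Finset.univ \ B) ×ˢ (Finset.univ : Finset (Fin 2)),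
                (T.filter fun y => y.1 = x).card := by
              apply Finset.sum_le_sum
              intro x hx
              simp only [Finset.mem_product, Finset.mem_sdiff, Finset.mem_univ, true_and] at hx
              exact hgood x hx.1
          _ ≤ ∑ x : Fin p × Fin 2, (T.filter fun y => y.1 = x).card :=
              Finset.sum_le_sum_of_subset (Finset.subset_univ _)
      have hcard : ((Finset.univ \ B) ×ˢ (Finset.univ : Finset (Fin 2))).card
          = (p - B.card) * 2 := by
        rw [Finset.card_product, Finset.card_sdiff_of_subset (Finset.subset_univ _)]
        simp
      omega
    omega
  -- Step B : |B| ≤ nonCycleCount F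
  have stepB : B.card ≤ nonCycleCount F := by
    have hmem : ∀ i : Fin p, i ∈ B → ∃ a, F.degree (Sum.inr (i, a)) ≤ 1 := by
      intro i hi
      simpa [hB] using hi
    set g : {i // i ∈ B} → {c : F.ConnectedComponent //
        ∃ v, F.connectedComponentMk v = c ∧ degN F v ≤ 1} := fun i =>
      ⟨F.connectedComponentMk (Sum.inr (i.1, (hmem i.1 i.2).choose)),
        ⟨Sum.inr (i.1, (hmem i.1 i.2).choose), rfl, by
          rw [degN_eq_degree]; exact (hmem i.1 i.2).choose_spec⟩⟩ with hg
    have ginj : Function.Injective g := by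
      intro i j hij
      have hreach : F.Reachable (Sum.inr (i.1, (hmem i.1 i.2).choose))
          (Sum.inr (j.1, (hmem j.1 j.2).choose)) := by
        rw [← SimpleGraph.ConnectedComponent.eq]
        exact congrArg Subtype.val hij
      obtain ⟨w⟩ := hreach
      rcases deg_walk F hc' w (hmem i.1 i.2).choose_spec with heq | hadj
      · exact Subtype.ext (Prod.ext_iff.1 (Sum.inr.inj heq)).1
      · have := hle hadj
        simp only [joinK2] at this
        exact Subtype.ext this.1
    calc B.card = Nat.card {i // i ∈ B} := by
          simp [Nat.card_eq_fintype_card, Fintype.card_coe]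
      _ ≤ _ := Nat.card_le_card_of_injective g ginj
  omega
end

section
/- For every positive integer k there exists a finite simple graph G with α(G) − δ(G) + 1 = k + 1 and f(G) = 2, where f(G) is the maximum of |I| − δ_G(I) + 1 over all nonempty independent sets I of G. Hence the gap between α(G) − δ(G) + 1 and f(G) can be arbitrarily large. -/
variable {V : Type*}

section Construction

private abbrev VV (k : ℕ) : Type := (Fin k ⊕ Fin k) ⊕ (Fin (2*k-1) ⊕ Unit)

private def adjFun (k : ℕ) : VV k → VV k → Prop
  | .inl _, .inl _ => False
  | .inl _, .inr (.inl _) => True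
  | .inl (.inl _), .inr (.inr _) => True
  | .inl (.inr _), .inr (.inr _) => False
  | .inr (.inl _), .inl _ => True
  | .inr (.inr _), .inl (.inl _) => True
  | .inr (.inr _), .inl (.inr _) => False
  | .inr (.inl c), .inr (.inl c') => c ≠ c'
  | .inr (.inl _), .inr (.inr _) => False
  | .inr (.inr _), .inr _ => False

private def GG (k : ℕ) : SimpleGraph (VV k) where
  Adj := adjFun k
  symm := ⟨by
    rintro (⟨i|i⟩|⟨c|⟨⟩⟩) (⟨j|j⟩|⟨d|⟨⟩⟩) h <;> simp_all [adjFun] <;> exact fun h' => h h'.symm⟩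
  loopless := ⟨by rintro (⟨i|i⟩|⟨c|⟨⟩⟩) h <;> simp_all [adjFun]⟩


variable {k : ℕ}

private lemma card_mono {s t : Set (VV k)} (h : s ⊆ t) : Nat.card s ≤ Nat.card t := by
  rw [Nat.card_coe_set_eq, Nat.card_coe_set_eq]; exact Set.ncard_le_ncard h (Set.toFinite t)

private lemma neigh_u :
    (GG k).neighborSet (.inr (.inr ())) = Set.range (fun i : Fin k => (.inl (.inl i) : VV k)) := by
  ext (⟨i|i⟩|⟨c|⟨⟩⟩) <;> simp [GG, adjFun, SimpleGraph.mem_neighborSet]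

private lemma degN_u : degN (GG k) (.inr (.inr ())) = k := by
  rw [degN, neigh_u, Nat.card_range_of_injective (fun a b h => by simpa using h)]
  simp

private lemma neigh_m2 (i : Fin k) :
    (GG k).neighborSet (.inl (.inr i)) = Set.range (fun c : Fin (2*k-1) => (.inr (.inl c) : VV k)) := by
  ext (⟨j|j⟩|⟨c|⟨⟩⟩) <;> simp [GG, adjFun, SimpleGraph.mem_neighborSet]

private lemma degN_m2 (i : Fin k) : degN (GG k) (.inl (.inr i)) = 2*k-1 := by
  rw [degN, neigh_m2, Nat.card_range_of_injective (fun a b h => by simpa using h)]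
  simp

private lemma neigh_m1 (i : Fin k) :
    (GG k).neighborSet (.inl (.inl i)) = Set.range (Sum.inr : (Fin (2*k-1) ⊕ Unit) → VV k) := by
  ext (⟨j|j⟩|⟨c|⟨⟩⟩) <;> simp [GG, adjFun, SimpleGraph.mem_neighborSet]

private lemma degN_m1 (i : Fin k) : degN (GG k) (.inl (.inl i)) = (2*k-1)+1 := by
  rw [degN, neigh_m1, Nat.card_range_of_injective Sum.inr_injective, Nat.card_sum]
  simp

private lemma degN_c_ge (c : Fin (2*k-1)) : k ≤ degN (GG k) (.inr (.inl c)) := by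
  have hsub : Set.range (fun i : Fin k => (.inl (.inl i) : VV k)) ⊆
      (GG k).neighborSet (.inr (.inl c)) := by
    rintro x ⟨i, rfl⟩; simp [GG, adjFun, SimpleGraph.mem_neighborSet]
  have := card_mono hsub
  rwa [Nat.card_range_of_injective (fun a b h => by simpa using h), Nat.card_eq_fintype_card,
    Fintype.card_fin] at this


private def Mfin (k : ℕ) : Finset (VV k) :=
  (Finset.univ : Finset (Fin k ⊕ Fin k)).map ⟨Sum.inl, Sum.inl_injective⟩

private lemma Mfin_card : (Mfin k).card = 2*k := by
  simp [Mfin]; omega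

private lemma Mfin_indep : IndepSet (GG k) ↑(Mfin k) := by
  intro x hx y hy hne
  simp only [Finset.coe_map, Set.mem_image, Mfin, Finset.coe_univ, Set.image_univ,
    Set.mem_range] at hx hy
  obtain ⟨a, rfl⟩ := hx
  obtain ⟨b, rfl⟩ := hy
  simp [GG, adjFun]

private lemma L1 {I : Finset (VV k)} (hI : IndepSet (GG k) ↑I) {c0 : Fin (2*k-1)}
    (hc : (.inr (.inl c0) : VV k) ∈ I) : I.card ≤ 2 := by
  have hsub : I ⊆ {(.inr (.inl c0) : VV k), .inr (.inr ())} := by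
    intro x hx
    match x with
    | .inl m =>
      exact absurd (hI (by exact_mod_cast hc) (by exact_mod_cast hx) (by simp))
        (by cases m <;> simp [GG, adjFun])
    | .inr (.inl c') =>
      rcases eq_or_ne c' c0 with rfl | hne
      · simp
      · exact absurd (hI (by exact_mod_cast hc) (by exact_mod_cast hx) (by simpa using hne.symm))
          (by simp [GG, adjFun, hne.symm])
    | .inr (.inr _) => simp
  exact (Finset.card_le_card hsub).trans ((Finset.card_insert_le _ _).trans (by simp))

private def M2u (k : ℕ) : Finset (VV k) :=
  ((Finset.univ : Finset (Fin k)).map ⟨fun i => Sum.inl (Sum.inr i),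
    fun a b h => by simpa using h⟩) ∪ {.inr (.inr ())}

private lemma L2 (hk : 1 ≤ k) {I : Finset (VV k)} (hI : IndepSet (GG k) ↑I)
    (hu : (.inr (.inr ()) : VV k) ∈ I) : I.card ≤ k + 1 := by
  by_cases hc : ∃ c0 : Fin (2*k-1), (.inr (.inl c0) : VV k) ∈ I
  · obtain ⟨c0, hc0⟩ := hc
    exact (L1 hI hc0).trans (by omega)
  · have hsub : I ⊆ M2u k := by
      intro x hx
      match x with
      | .inl (.inl i) =>
        exact absurd (hI (by exact_mod_cast hu) (by exact_mod_cast hx) (by simp))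
          (by simp [GG, adjFun])
      | .inl (.inr i) => simp [M2u]; exact ⟨i, rfl⟩
      | .inr (.inl c') => exact absurd ⟨c', hx⟩ hc
      | .inr (.inr _) => simp [M2u]
    refine (Finset.card_le_card hsub).trans ?_
    refine (Finset.card_union_le _ _).trans ?_
    simp

private lemma L3 (hk : 1 ≤ k) {I : Finset (VV k)} (hI : IndepSet (GG k) ↑I) :
    I.card ≤ 2*k := by
  by_cases hc : ∃ c0 : Fin (2*k-1), (.inr (.inl c0) : VV k) ∈ I
  · obtain ⟨c0, hc0⟩ := hc
    exact (L1 hI hc0).trans (by omega)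
  by_cases hu : (.inr (.inr ()) : VV k) ∈ I
  · exact (L2 hk hI hu).trans (by omega)
  · have hsub : I ⊆ Mfin k := by
      intro x hx
      match x with
      | .inl m => simp [Mfin]
      | .inr (.inl c') => exact absurd ⟨c', hx⟩ hc
      | .inr (.inr _) => exact absurd hx (by rintro h; exact hu h)
    exact (Finset.card_le_card hsub).trans (by rw [Mfin_card])

private lemma key (hk : 1 ≤ k) {I : Finset (VV k)} (hI : IndepSet (GG k) ↑I)
    {v : VV k} (hv : v ∈ I) : I.card ≤ degN (GG k) v + 1 := by
  match v with
  | .inl (.inl i) =>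
    have := L3 hk hI; have := degN_m1 i; omega
  | .inl (.inr i) =>
    have := L3 hk hI; have := degN_m2 i; omega
  | .inr (.inl c) =>
    have := L1 hI hv; have := degN_c_ge c; omega
  | .inr (.inr ()) =>
    have := L2 hk hI hv; have := (degN_u (k := k)); omega

private lemma minDegOn_indep_bound (hk : 1 ≤ k) {I : Finset (VV k)} (hne : I.Nonempty)
    (hI : IndepSet (GG k) ↑I) : I.card ≤ minDegOn (GG k) ↑I + 1 := by
  have himg : (degN (GG k) '' ↑I).Nonempty := (hne.to_set).image _
  have hmem := Nat.sInf_mem himg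
  obtain ⟨v, hvI, hveq⟩ := hmem
  rw [minDegOn, ← hveq]
  exact key hk hI (by exact_mod_cast hvI)

private lemma minDegOn_Mfin (hk : 1 ≤ k) : minDegOn (GG k) ↑(Mfin k) = 2*k-1 := by
  refine IsLeast.csInf_eq ⟨⟨.inl (.inr ⟨0, hk⟩), ?_, degN_m2 _⟩, ?_⟩
  · simp [Mfin]
  · rintro d ⟨x, hx, rfl⟩
    simp only [Finset.coe_map, Mfin, Finset.coe_univ, Set.image_univ, Set.mem_range] at hx
    obtain ⟨a, rfl⟩ := hx
    simp only [Function.Embedding.coeFn_mk]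
    match a with
    | .inl i => rw [degN_m1]; omega
    | .inr i => rw [degN_m2]

private lemma minDeg_GG (hk : 1 ≤ k) : minDeg (GG k) = k := by
  refine IsLeast.csInf_eq ⟨⟨.inr (.inr ()), degN_u⟩, ?_⟩
  rintro d ⟨v, rfl⟩
  match v with
  | .inl (.inl i) => rw [degN_m1]; omega
  | .inl (.inr i) => rw [degN_m2]; omega
  | .inr (.inl c) => exact degN_c_ge c
  | .inr (.inr ()) => rw [degN_u]

private lemma indNum_GG (hk : 1 ≤ k) : indNum (GG k) = 2*k := by
  refine IsGreatest.csSup_eq ⟨⟨Mfin k, Mfin_indep, Mfin_card⟩, ?_⟩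
  rintro n ⟨I, hI, rfl⟩
  exact L3 hk hI

private lemma fVal_GG (hk : 1 ≤ k) : fVal (GG k) = 2 := by
  refine IsGreatest.csSup_eq ⟨⟨Mfin k, ?_, Mfin_indep, ?_⟩, ?_⟩
  · exact ⟨.inl (.inl ⟨0, hk⟩), by simp [Mfin]⟩
  · rw [Mfin_card, minDegOn_Mfin hk]; push_cast; omega
  · rintro z ⟨I, hne, hI, rfl⟩
    have := minDegOn_indep_bound hk hne hI
    omega

end Construction

/-- For every positive integer `k` there is a finite graph `G` with
`α(G) - δ(G) + 1 = k + 1` and `f(G) = 2`: the gap between `f(G)` and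
`α(G) - δ(G) + 1` can be arbitrarily large. -/
theorem exists_graph_large_gap (k : ℕ) (hk : 1 ≤ k) :
    ∃ (V : Type) (_ : Fintype V) (G : SimpleGraph V),
      (indNum G : ℤ) - (minDeg G : ℤ) + 1 = (k : ℤ) + 1 ∧ fVal G = 2 := by
  refine ⟨VV k, inferInstance, GG k, ?_, fVal_GG hk⟩
  rw [indNum_GG hk, minDeg_GG hk]
  omega
end
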